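/- arXiv:1210.7559 — 5 statements merged into one kernel-verified Lean document; each statement's English description precedes it below -/
import Mathlib

section
/- Let d ≥ k ≥ 1, σ > 0, w_1, …, w_k > 0 with Σ_{i=1}^k w_i = 1, and μ_1, …, μ_k ∈ ℝ^d. On a probability space, let h be a random variable with values in [k] with P[h = i] = w_i, and let z = (z_1, …, z_d) be a random vector whose coordinates z_1, …, z_d are i.i.d. centered real Gaussian random variables of variance σ², with z independent of h. Set x := μ_h + z. Then: (1) σ² is the smallest eigenvalue of the covariance matrix E[x xᵀ] − E[x] E[x]ᵀ; (2) E[x xᵀ] − σ² I_d = Σ_{i=1}^k w_i μ_i μ_iᵀ; (3) for all a, b, c ∈ [d], E[x_a x_b x_c] − σ²·(E[x]_a·1{b=c} + E[x]_b·1{a=c} + E[x]_c·1{a=b}) = Σ_{i=1}^k w_i (μ_i)_a (μ_i)_b (μ_i)_c, i.e. E[x ⊗ x ⊗ x] − σ² Σ_{i=1}^d (E[x] ⊗ e_i ⊗ e_i + e_i ⊗ E[x] ⊗ e_i + e_i ⊗ e_i ⊗ E[x]) = Σ_{i=1}^k w_i μ_i ⊗ μ_i ⊗ μ_i. -/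
open scoped BigOperators
open MeasureTheory ProbabilityTheory

set_option linter.unusedSectionVars false
set_option maxHeartbeats 1000000

namespace Stmt1Aux
open Real
open scoped NNReal ENNReal


lemma aux_int_pow_exp {b : ℝ} (hb : 0 < b) (n : ℕ) :
    Integrable (fun x : ℝ => x ^ n * Real.exp (-b * x ^ 2)) := by
  have h := integrable_rpow_mul_exp_neg_mul_sq hb (s := (n : ℝ)) (lt_of_lt_of_le (by norm_num) (Nat.cast_nonneg n))
  simpa [Real.rpow_natCast] using h

lemma aux_int_sq_exp {b : ℝ} (hb : 0 < b) :
    ∫ x : ℝ, x ^ 2 * Real.exp (-b * x ^ 2) = Real.sqrt (π / b) / (2 * b) := by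
  set u : ℝ → ℝ := fun y => y with hu_def
  set v : ℝ → ℝ := fun y => -(2 * b)⁻¹ * Real.exp (-b * y ^ 2) with hv_def
  set u' : ℝ → ℝ := fun _ => (1 : ℝ) with hu'_def
  set v' : ℝ → ℝ := fun y => y * Real.exp (-b * y ^ 2) with hv'_def
  have hu : ∀ x : ℝ, HasDerivAt u (u' x) x := fun x => hasDerivAt_id x
  have hv : ∀ x : ℝ, HasDerivAt v (v' x) x := by
    intro x
    have h1 : HasDerivAt (fun y : ℝ => -b * y ^ 2) (-b * (2 * x)) x := by
      simpa [mul_comm] using ((hasDerivAt_pow 2 x).const_mul (-b))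
    have h2 := (h1.exp).const_mul (-(2 * b)⁻¹)
    refine h2.congr_deriv ?_
    show _ = x * Real.exp (-b * x ^ 2)
    field_simp
  have e1 : u * v' = fun x => x ^ 2 * Real.exp (-b * x ^ 2) := by
    funext x; simp [hu_def, hv'_def]; ring
  have e2 : u' * v = fun x => -(2 * b)⁻¹ * Real.exp (-b * x ^ 2) := by
    funext x; simp [hu'_def, hv_def]
  have e3 : u * v = fun x => -(2 * b)⁻¹ * (x * Real.exp (-b * x ^ 2)) := by
    funext x; simp [hu_def, hv_def]; ring
  have huv' : Integrable (u * v') := by rw [e1]; exact aux_int_pow_exp hb 2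
  have hu'v : Integrable (u' * v) := by
    rw [e2]; exact (integrable_exp_neg_mul_sq hb).const_mul _
  have huv : Integrable (u * v) := by
    rw [e3]
    exact ((aux_int_pow_exp hb 1).congr (by filter_upwards with x; simp)).const_mul _
  have key := integral_mul_deriv_eq_deriv_mul_of_integrable (fun x _ => hu x) (fun x _ => hv x) huv' hu'v huv
  have : ∫ x : ℝ, x ^ 2 * Real.exp (-b * x ^ 2) = ∫ x, u x * v' x := by
    congr 1; funext x; simp [hu_def, hv'_def]; ring
  rw [this, key]
  have : ∫ x, u' x * v x = -(2 * b)⁻¹ * Real.sqrt (π / b) := by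
    simp only [hu'_def, hv_def, one_mul]
    rw [integral_const_mul, integral_gaussian]
  rw [this]
  field_simp



-- rewrite gaussian integral as weighted Lebesgue integral
lemma aux_gauss_integral {v : ℝ≥0} (hv : 0 < v) (f : ℝ → ℝ) :
    ∫ x, f x ∂(gaussianReal 0 v)
      = ∫ x, gaussianPDFReal 0 v x * f x := by
  rw [gaussianReal_of_var_ne_zero 0 hv.ne']
  have hmeas : Measurable fun x => (gaussianPDFReal 0 v x).toNNReal :=
    (measurable_gaussianPDFReal 0 v).real_toNNReal
  have : (gaussianPDF 0 v) = fun x => ((gaussianPDFReal 0 v x).toNNReal : ℝ≥0∞) := by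
    funext x; simp [gaussianPDF, ENNReal.ofReal]
  rw [this, integral_withDensity_eq_integral_smul hmeas]
  congr 1; funext x
  simp [NNReal.smul_def, Real.coe_toNNReal _ (gaussianPDFReal_nonneg 0 v x)]

lemma aux_pdf_eq {v : ℝ≥0} (hv : 0 < v) :
    gaussianPDFReal 0 v = fun x => (Real.sqrt (2 * π * v))⁻¹ * Real.exp (-(2 * (v:ℝ))⁻¹ * x ^ 2) := by
  funext x
  have hvpos : (0:ℝ) < v := hv
  rw [gaussianPDFReal, sub_zero]
  congr 2
  field_simp

lemma aux_gauss_integrable_pow {v : ℝ≥0} (hv : 0 < v) (n : ℕ) :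
    Integrable (fun x : ℝ => x ^ n) (gaussianReal 0 v) := by
  rw [gaussianReal_of_var_ne_zero 0 hv.ne']
  have hmeas : Measurable fun x => (gaussianPDFReal 0 v x).toNNReal :=
    (measurable_gaussianPDFReal 0 v).real_toNNReal
  have : (gaussianPDF 0 v) = fun x => ((gaussianPDFReal 0 v x).toNNReal : ℝ≥0∞) := by
    funext x; simp [gaussianPDF, ENNReal.ofReal]
  rw [this, integrable_withDensity_iff_integrable_smul hmeas]
  have hb : (0:ℝ) < (2 * (v:ℝ))⁻¹ := by positivity
  refine ((aux_int_pow_exp hb n).const_mul ((Real.sqrt (2 * π * v))⁻¹)).congr ?_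
  filter_upwards with x
  rw [NNReal.smul_def, Real.coe_toNNReal _ (gaussianPDFReal_nonneg 0 v x), smul_eq_mul,
    aux_pdf_eq hv]
  ring

lemma aux_gauss_sq {v : ℝ≥0} (hv : 0 < v) :
    ∫ x, x ^ 2 ∂(gaussianReal 0 v) = v := by
  rw [aux_gauss_integral hv, aux_pdf_eq hv]
  have hb : (0:ℝ) < (2 * (v:ℝ))⁻¹ := by positivity
  have hvpos : (0:ℝ) < v := hv
  calc ∫ x, (Real.sqrt (2 * π * v))⁻¹ * Real.exp (-(2 * (v:ℝ))⁻¹ * x ^ 2) * x ^ 2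
      = (Real.sqrt (2 * π * v))⁻¹ * ∫ x, x ^ 2 * Real.exp (-(2 * (v:ℝ))⁻¹ * x ^ 2) := by
        rw [← integral_const_mul]; congr 1; funext x; ring
    _ = (Real.sqrt (2 * π * v))⁻¹ * (Real.sqrt (π / (2 * (v:ℝ))⁻¹) / (2 * (2 * (v:ℝ))⁻¹)) := by
        rw [aux_int_sq_exp hb]
    _ = v := by
        rw [show π / (2 * (v:ℝ))⁻¹ = 2 * π * (v:ℝ) by field_simp,
          show (2:ℝ) * (2 * (v:ℝ))⁻¹ = (v:ℝ)⁻¹ by field_simp, div_inv_eq_mul,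
          ← mul_assoc, inv_mul_cancel₀ (Real.sqrt_ne_zero'.2 (by positivity)), one_mul]

-- odd moments vanish
lemma aux_gauss_odd {v : ℝ≥0} (n : ℕ) (hn : Odd n) :
    ∫ x, x ^ n ∂(gaussianReal 0 v) = 0 := by
  have hmap : (gaussianReal 0 v).map (fun x => (-1 : ℝ) * x) = gaussianReal 0 v := by
    have hvv : (NNReal.mk ((-1:ℝ)^2) (sq_nonneg _) * v) = v := by
      ext; simp
    rw [gaussianReal_map_const_mul, hvv, mul_zero]
  have hmeas : Measurable fun x : ℝ => x ^ n := measurable_id.pow_const n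
  have : ∫ x, x ^ n ∂(gaussianReal 0 v)
      = ∫ x, ((-1 : ℝ) * x) ^ n ∂(gaussianReal 0 v) := by
    conv_lhs => rw [← hmap]
    rw [integral_map (by fun_prop) hmeas.aestronglyMeasurable]
  have hodd : ∀ x : ℝ, ((-1 : ℝ) * x) ^ n = -(x ^ n) := by
    intro x; rw [mul_pow, hn.neg_one_pow]; ring
  simp only [hodd, integral_neg] at this
  linarith



section
variable {d : ℕ} {σ : ℝ} (hσ : 0 < σ)
  {Ω : Type*} [MeasureSpace Ω] [IsProbabilityMeasure (ℙ : Measure Ω)]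
  {z : Ω → Fin d → ℝ} (hzm : ∀ i, Measurable fun ω => z ω i)
  (hzlaw : ∀ i, Measure.map (fun ω => z ω i) ℙ = gaussianReal 0 ⟨σ ^ 2, sq_nonneg σ⟩)

include hσ

lemma hv_pos : (0 : ℝ≥0) < (⟨σ ^ 2, sq_nonneg σ⟩ : ℝ≥0) := by
  change (0:ℝ) < σ ^ 2; exact pow_pos hσ 2

include hzm hzlaw

lemma zint (a : Fin d) (n : ℕ) : Integrable (fun ω => z ω a ^ n) ℙ := by
  have hmeas : AEStronglyMeasurable (fun x : ℝ => x ^ n)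
      (Measure.map (fun ω => z ω a) ℙ) :=
    (measurable_id.pow_const n).aestronglyMeasurable
  have := (integrable_map_measure hmeas (hzm a).aemeasurable).mp
  exact this (by rw [hzlaw a]; exact aux_gauss_integrable_pow (hv_pos hσ) n)

lemma zmom (a : Fin d) (n : ℕ) :
    ∫ ω, z ω a ^ n ∂ℙ = ∫ x, x ^ n ∂(gaussianReal 0 ⟨σ ^ 2, sq_nonneg σ⟩) := by
  rw [← hzlaw a]
  exact (integral_map (hzm a).aemeasurable
    (f := fun x : ℝ => x ^ n) (measurable_id.pow_const n).aestronglyMeasurable).symm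

lemma zmean (a : Fin d) : ∫ ω, z ω a ∂ℙ = 0 := by
  calc ∫ ω, z ω a ∂ℙ = ∫ ω, z ω a ^ 1 ∂ℙ := by simp
    _ = ∫ x, x ^ 1 ∂(gaussianReal 0 ⟨σ ^ 2, sq_nonneg σ⟩) := zmom hσ hzm hzlaw a 1
    _ = 0 := aux_gauss_odd 1 odd_one

lemma zsq (a : Fin d) : ∫ ω, z ω a * z ω a ∂ℙ = σ ^ 2 := by
  have := zmom hσ hzm hzlaw a 2
  rw [aux_gauss_sq (hv_pos hσ)] at this
  exact (by simp [pow_two] : ∫ ω, z ω a * z ω a ∂ℙ = ∫ ω, z ω a ^ 2 ∂ℙ).trans this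

lemma zint1 (a : Fin d) : Integrable (fun ω => z ω a) ℙ := by
  simpa using zint hσ hzm hzlaw a 1

variable (hziid : iIndepFun (fun i ω => z ω i) ℙ)
include hziid

lemma zcov (a b : Fin d) :
    ∫ ω, z ω a * z ω b ∂ℙ = if a = b then σ ^ 2 else 0 := by
  by_cases hab : a = b
  · subst hab; simp [zsq hσ hzm hzlaw a]
  · have hind : IndepFun (fun ω => z ω a) (fun ω => z ω b) ℙ := hziid.indepFun hab
    rw [if_neg hab]
    have := hind.integral_mul_eq_mul_integral (zint1 hσ hzm hzlaw a).aestronglyMeasurable (zint1 hσ hzm hzlaw b).aestronglyMeasurable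
    simpa [Pi.mul_apply, zmean hσ hzm hzlaw] using this

lemma zint2 (a b : Fin d) : Integrable (fun ω => z ω a * z ω b) ℙ := by
  by_cases hab : a = b
  · subst hab; simpa [pow_two] using zint hσ hzm hzlaw a 2
  · exact ((hziid.indepFun hab).integrable_mul (zint1 hσ hzm hzlaw a) (zint1 hσ hzm hzlaw b))

lemma zint3 (a b c : Fin d) : Integrable (fun ω => z ω a * z ω b * z ω c) ℙ := by
  by_cases hac : a = c
  · subst hac
    by_cases hab : a = b
    · subst hab; simpa [pow_succ, pow_two] using zint hσ hzm hzlaw a 3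
    · have hind : IndepFun (fun ω => z ω a * z ω a) (fun ω => z ω b) ℙ :=
        ((hziid.indepFun hab).comp (measurable_id.mul measurable_id) measurable_id)
      have := hind.integrable_mul (zint2 hσ hzm hzlaw hziid a a) (zint1 hσ hzm hzlaw b)
      refine this.congr ?_
      filter_upwards with ω; simp [Pi.mul_apply]; ring
  · by_cases hbc : b = c
    · subst hbc
      have hind : IndepFun (fun ω => z ω b * z ω b) (fun ω => z ω a) ℙ :=
        ((hziid.indepFun (Ne.symm hac)).comp (measurable_id.mul measurable_id) measurable_id)
      have := hind.integrable_mul (zint2 hσ hzm hzlaw hziid b b) (zint1 hσ hzm hzlaw a)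
      refine this.congr ?_
      filter_upwards with ω; simp [Pi.mul_apply]; ring
    · have hind : IndepFun ((fun i ω => z ω i) a * (fun i ω => z ω i) b)
          ((fun i ω => z ω i) c) ℙ :=
        hziid.indepFun_mul_left hzm a b c hac hbc
      have := hind.integrable_mul (zint2 hσ hzm hzlaw hziid a b) (zint1 hσ hzm hzlaw c)
      exact this.congr (by filter_upwards with ω; simp [Pi.mul_apply])

lemma zthird (a b c : Fin d) : ∫ ω, z ω a * z ω b * z ω c ∂ℙ = 0 := by
  by_cases hac : a = c
  · subst hac
    by_cases hab : a = b
    · subst hab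
      have := zmom hσ hzm hzlaw a 3
      have := this.trans (aux_gauss_odd 3 ⟨1, by norm_num⟩)
      rw [← this]; congr 1; funext ω; ring
    · have hind : IndepFun (fun ω => z ω a * z ω a) (fun ω => z ω b) ℙ :=
        ((hziid.indepFun hab).comp (measurable_id.mul measurable_id) measurable_id)
      have h2 := hind.integral_mul_eq_mul_integral (zint2 hσ hzm hzlaw hziid a a).aestronglyMeasurable
        (zint1 hσ hzm hzlaw b).aestronglyMeasurable
      have e : ∫ ω, z ω a * z ω b * z ω a ∂ℙ = ∫ ω, (z ω a * z ω a) * z ω b ∂ℙ := by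
        congr 1; funext ω; ring
      rw [e]
      simpa [Pi.mul_apply, zmean hσ hzm hzlaw b] using h2
  · by_cases hbc : b = c
    · subst hbc
      have hind : IndepFun (fun ω => z ω b * z ω b) (fun ω => z ω a) ℙ :=
        ((hziid.indepFun (Ne.symm hac)).comp (measurable_id.mul measurable_id) measurable_id)
      have h2 := hind.integral_mul_eq_mul_integral (zint2 hσ hzm hzlaw hziid b b).aestronglyMeasurable
        (zint1 hσ hzm hzlaw a).aestronglyMeasurable
      have e : ∫ ω, z ω a * z ω b * z ω b ∂ℙ = ∫ ω, (z ω b * z ω b) * z ω a ∂ℙ := by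
        congr 1; funext ω; ring
      rw [e]
      simpa [Pi.mul_apply, zmean hσ hzm hzlaw a] using h2
    · have hind : IndepFun ((fun i ω => z ω i) a * (fun i ω => z ω i) b)
          ((fun i ω => z ω i) c) ℙ :=
        hziid.indepFun_mul_left hzm a b c hac hbc
      have h2 := hind.integral_mul_eq_mul_integral (zint2 hσ hzm hzlaw hziid a b).aestronglyMeasurable
        (zint1 hσ hzm hzlaw c).aestronglyMeasurable
      simpa [Pi.mul_apply, zmean hσ hzm hzlaw c] using h2

end


section
variable {k d : ℕ} {w : Fin k → ℝ}
  {Ω : Type*} [MeasureSpace Ω] [IsProbabilityMeasure (ℙ : Measure Ω)]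
  {h : Ω → Fin k} (hh : Measurable h)
  (hw : ∀ i, 0 < w i)
  (hlaw : ∀ i, (ℙ : Measure Ω) {ω | h ω = i} = ENNReal.ofReal (w i))
  {z : Ω → Fin d → ℝ} (hzm : ∀ i, Measurable fun ω => z ω i)
  (hindep : IndepFun h z ℙ)
include hh hw hlaw hzm hindep

lemma hint (f : Fin k → ℝ) : Integrable (fun ω => f (h ω)) ℙ := by
  refine (integrable_const (∑ i, ‖f i‖)).mono'
    ((measurable_of_countable f).comp hh).aestronglyMeasurable ?_
  filter_upwards with ω
  exact Finset.single_le_sum (f := fun i => ‖f i‖) (fun i _ => norm_nonneg _)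
    (Finset.mem_univ _)

lemma hmean (f : Fin k → ℝ) : ∫ ω, f (h ω) ∂ℙ = ∑ i, w i * f i := by
  have hmap : ∫ ω, f (h ω) ∂ℙ = ∫ y, f y ∂(Measure.map h ℙ) :=
    (integral_map hh.aemeasurable (measurable_of_countable f).aestronglyMeasurable).symm
  have : IsProbabilityMeasure (Measure.map h ℙ) := Measure.isProbabilityMeasure_map hh.aemeasurable
  rw [hmap, integral_fintype Integrable.of_finite]
  congr 1; funext i
  rw [measureReal_def, Measure.map_apply hh (measurableSet_singleton i)]
  have : h ⁻¹' {i} = {ω | h ω = i} := rfl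
  rw [this, hlaw i, smul_eq_mul, ENNReal.toReal_ofReal (hw i).le]

lemma hzmeas : Measurable z := by
  exact measurable_pi_iff.mpr hzm

lemma hGindep (f : Fin k → ℝ) {G : (Fin d → ℝ) → ℝ} (hG : Measurable G) :
    IndepFun (fun ω => f (h ω)) (fun ω => G (z ω)) ℙ :=
  hindep.comp (measurable_of_countable f) hG

lemma hGint (f : Fin k → ℝ) {G : (Fin d → ℝ) → ℝ} (hG : Measurable G)
    (hGi : Integrable (fun ω => G (z ω)) ℙ) :
    Integrable (fun ω => f (h ω) * G (z ω)) ℙ := by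
  have := (hGindep hh hw hlaw hzm hindep f hG).integrable_mul (hint hh hw hlaw hzm hindep f) hGi
  exact this.congr (by filter_upwards with ω; simp [Pi.mul_apply])

lemma hGmul (f : Fin k → ℝ) {G : (Fin d → ℝ) → ℝ} (hG : Measurable G)
    (hGi : Integrable (fun ω => G (z ω)) ℙ) :
    ∫ ω, f (h ω) * G (z ω) ∂ℙ = (∑ i, w i * f i) * ∫ ω, G (z ω) ∂ℙ := by
  have := (hGindep hh hw hlaw hzm hindep f hG).integral_mul_eq_mul_integral (hint hh hw hlaw hzm hindep f).aestronglyMeasurable hGi.aestronglyMeasurable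
  rw [← hmean hh hw hlaw hzm hindep f]
  simpa [Pi.mul_apply] using this

end

section moments
variable {k d : ℕ} (σ : ℝ) (hσ : 0 < σ)
  {w : Fin k → ℝ} (hw : ∀ i, 0 < w i)
  {μv : Fin k → Fin d → ℝ}
  {Ω : Type*} [MeasureSpace Ω] [IsProbabilityMeasure (ℙ : Measure Ω)]
  {h : Ω → Fin k} (hh : Measurable h)
  (hlaw : ∀ i, (ℙ : Measure Ω) {ω | h ω = i} = ENNReal.ofReal (w i))
  {z : Ω → Fin d → ℝ} (hzm : ∀ i, Measurable fun ω => z ω i)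
  (hziid : iIndepFun (fun i ω => z ω i) ℙ)
  (hzlaw : ∀ i, Measure.map (fun ω => z ω i) ℙ = gaussianReal 0 ⟨σ ^ 2, sq_nonneg σ⟩)
  (hindep : IndepFun h z ℙ)
  {x : Ω → Fin d → ℝ} (hx : ∀ ω, x ω = μv (h ω) + z ω)

include hσ hw hh hlaw hzm hziid hzlaw hindep hx

lemma E1 (a : Fin d) : ∫ ω, x ω a ∂ℙ = ∑ i, w i * μv i a := by
  have t1 : ∫ ω, μv (h ω) a ∂ℙ = ∑ i, w i * μv i a :=
    hmean hh hw hlaw hzm hindep (fun i => μv i a)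
  have i1 : Integrable (fun ω => μv (h ω) a) ℙ := hint hh hw hlaw hzm hindep (fun i => μv i a)
  have i2 : Integrable (fun ω => z ω a) ℙ := zint1 hσ hzm hzlaw a
  simp only [hx, Pi.add_apply]
  rw [integral_add i1 i2, t1, zmean hσ hzm hzlaw a, add_zero]

lemma E2 (a b : Fin d) : ∫ ω, x ω a * x ω b ∂ℙ
    = ∑ i, w i * (μv i a * μv i b) + σ ^ 2 * (if a = b then 1 else 0) := by
  have i1 : Integrable (fun ω => μv (h ω) a * μv (h ω) b) ℙ :=
    hint hh hw hlaw hzm hindep (fun i => μv i a * μv i b)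
  have i2 : Integrable (fun ω => μv (h ω) a * z ω b) ℙ :=
    hGint hh hw hlaw hzm hindep (fun i => μv i a) (measurable_pi_apply b) (zint1 hσ hzm hzlaw b)
  have i3 : Integrable (fun ω => μv (h ω) b * z ω a) ℙ :=
    hGint hh hw hlaw hzm hindep (fun i => μv i b) (measurable_pi_apply a) (zint1 hσ hzm hzlaw a)
  have i4 : Integrable (fun ω => z ω a * z ω b) ℙ := zint2 hσ hzm hzlaw hziid a b
  have e : ∀ ω, (μv (h ω) a + z ω a) * (μv (h ω) b + z ω b)
      = μv (h ω) a * μv (h ω) b + μv (h ω) a * z ω b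
        + μv (h ω) b * z ω a + z ω a * z ω b := by intro ω; ring
  have t1 : ∫ ω, μv (h ω) a * μv (h ω) b ∂ℙ = ∑ i, w i * (μv i a * μv i b) :=
    hmean hh hw hlaw hzm hindep (fun i => μv i a * μv i b)
  have t2 : ∫ ω, μv (h ω) a * z ω b ∂ℙ = (∑ i, w i * μv i a) * ∫ ω, z ω b ∂ℙ :=
    hGmul hh hw hlaw hzm hindep (fun i => μv i a) (measurable_pi_apply b) (zint1 hσ hzm hzlaw b)
  have t3 : ∫ ω, μv (h ω) b * z ω a ∂ℙ = (∑ i, w i * μv i b) * ∫ ω, z ω a ∂ℙ :=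
    hGmul hh hw hlaw hzm hindep (fun i => μv i b) (measurable_pi_apply a) (zint1 hσ hzm hzlaw a)
  have t4 : ∫ ω, z ω a * z ω b ∂ℙ = if a = b then σ ^ 2 else 0 := zcov hσ hzm hzlaw hziid a b
  have s2 : Integrable (fun ω => μv (h ω) a * μv (h ω) b + μv (h ω) a * z ω b) ℙ := i1.add i2
  have s3 : Integrable (fun ω => μv (h ω) a * μv (h ω) b + μv (h ω) a * z ω b
      + μv (h ω) b * z ω a) ℙ := s2.add i3
  simp only [hx, Pi.add_apply, e]
  rw [integral_add s3 i4, integral_add s2 i3, integral_add i1 i2,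
    t1, t2, t3, t4, zmean hσ hzm hzlaw a, zmean hσ hzm hzlaw b]
  split_ifs <;> ring

lemma E3 (a b c : Fin d) : ∫ ω, x ω a * x ω b * x ω c ∂ℙ
    = ∑ i, w i * (μv i a * μv i b * μv i c)
      + σ ^ 2 * ((∑ i, w i * μv i a) * (if b = c then 1 else 0)
        + (∑ i, w i * μv i b) * (if a = c then 1 else 0)
        + (∑ i, w i * μv i c) * (if a = b then 1 else 0)) := by
  have mbc : Measurable fun y : Fin d → ℝ => y b * y c :=
    (measurable_pi_apply b).mul (measurable_pi_apply c)
  have mac : Measurable fun y : Fin d → ℝ => y a * y c :=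
    (measurable_pi_apply a).mul (measurable_pi_apply c)
  have mab : Measurable fun y : Fin d → ℝ => y a * y b :=
    (measurable_pi_apply a).mul (measurable_pi_apply b)
  have i1 : Integrable (fun ω => μv (h ω) a * μv (h ω) b * μv (h ω) c) ℙ :=
    hint hh hw hlaw hzm hindep (fun i => μv i a * μv i b * μv i c)
  have i2 : Integrable (fun ω => μv (h ω) a * μv (h ω) b * z ω c) ℙ :=
    hGint hh hw hlaw hzm hindep (fun i => μv i a * μv i b) (measurable_pi_apply c)
      (zint1 hσ hzm hzlaw c)
  have i3 : Integrable (fun ω => μv (h ω) a * μv (h ω) c * z ω b) ℙ :=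
    hGint hh hw hlaw hzm hindep (fun i => μv i a * μv i c) (measurable_pi_apply b)
      (zint1 hσ hzm hzlaw b)
  have i4 : Integrable (fun ω => μv (h ω) b * μv (h ω) c * z ω a) ℙ :=
    hGint hh hw hlaw hzm hindep (fun i => μv i b * μv i c) (measurable_pi_apply a)
      (zint1 hσ hzm hzlaw a)
  have i5 : Integrable (fun ω => μv (h ω) a * (z ω b * z ω c)) ℙ :=
    hGint hh hw hlaw hzm hindep (fun i => μv i a) mbc (zint2 hσ hzm hzlaw hziid b c)
  have i6 : Integrable (fun ω => μv (h ω) b * (z ω a * z ω c)) ℙ :=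
    hGint hh hw hlaw hzm hindep (fun i => μv i b) mac (zint2 hσ hzm hzlaw hziid a c)
  have i7 : Integrable (fun ω => μv (h ω) c * (z ω a * z ω b)) ℙ :=
    hGint hh hw hlaw hzm hindep (fun i => μv i c) mab (zint2 hσ hzm hzlaw hziid a b)
  have i8 : Integrable (fun ω => z ω a * z ω b * z ω c) ℙ := zint3 hσ hzm hzlaw hziid a b c
  have e : ∀ ω, (μv (h ω) a + z ω a) * (μv (h ω) b + z ω b) * (μv (h ω) c + z ω c)
      = μv (h ω) a * μv (h ω) b * μv (h ω) c
        + μv (h ω) a * μv (h ω) b * z ω c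
        + μv (h ω) a * μv (h ω) c * z ω b
        + μv (h ω) b * μv (h ω) c * z ω a
        + μv (h ω) a * (z ω b * z ω c)
        + μv (h ω) b * (z ω a * z ω c)
        + μv (h ω) c * (z ω a * z ω b)
        + z ω a * z ω b * z ω c := by intro ω; ring
  have t1 : ∫ ω, μv (h ω) a * μv (h ω) b * μv (h ω) c ∂ℙ
      = ∑ i, w i * (μv i a * μv i b * μv i c) :=
    hmean hh hw hlaw hzm hindep (fun i => μv i a * μv i b * μv i c)
  have t2 : ∫ ω, μv (h ω) a * μv (h ω) b * z ω c ∂ℙ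
      = (∑ i, w i * (μv i a * μv i b)) * ∫ ω, z ω c ∂ℙ :=
    hGmul hh hw hlaw hzm hindep (fun i => μv i a * μv i b) (measurable_pi_apply c)
      (zint1 hσ hzm hzlaw c)
  have t3 : ∫ ω, μv (h ω) a * μv (h ω) c * z ω b ∂ℙ
      = (∑ i, w i * (μv i a * μv i c)) * ∫ ω, z ω b ∂ℙ :=
    hGmul hh hw hlaw hzm hindep (fun i => μv i a * μv i c) (measurable_pi_apply b)
      (zint1 hσ hzm hzlaw b)
  have t4 : ∫ ω, μv (h ω) b * μv (h ω) c * z ω a ∂ℙ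
      = (∑ i, w i * (μv i b * μv i c)) * ∫ ω, z ω a ∂ℙ :=
    hGmul hh hw hlaw hzm hindep (fun i => μv i b * μv i c) (measurable_pi_apply a)
      (zint1 hσ hzm hzlaw a)
  have t5 : ∫ ω, μv (h ω) a * (z ω b * z ω c) ∂ℙ
      = (∑ i, w i * μv i a) * ∫ ω, z ω b * z ω c ∂ℙ :=
    hGmul hh hw hlaw hzm hindep (fun i => μv i a) mbc (zint2 hσ hzm hzlaw hziid b c)
  have t6 : ∫ ω, μv (h ω) b * (z ω a * z ω c) ∂ℙ
      = (∑ i, w i * μv i b) * ∫ ω, z ω a * z ω c ∂ℙ :=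
    hGmul hh hw hlaw hzm hindep (fun i => μv i b) mac (zint2 hσ hzm hzlaw hziid a c)
  have t7 : ∫ ω, μv (h ω) c * (z ω a * z ω b) ∂ℙ
      = (∑ i, w i * μv i c) * ∫ ω, z ω a * z ω b ∂ℙ :=
    hGmul hh hw hlaw hzm hindep (fun i => μv i c) mab (zint2 hσ hzm hzlaw hziid a b)
  have s2 : Integrable (fun ω => μv (h ω) a * μv (h ω) b * μv (h ω) c
      + μv (h ω) a * μv (h ω) b * z ω c) ℙ := i1.add i2
  have s3 : Integrable (fun ω => μv (h ω) a * μv (h ω) b * μv (h ω) c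
      + μv (h ω) a * μv (h ω) b * z ω c + μv (h ω) a * μv (h ω) c * z ω b) ℙ := s2.add i3
  have s4 : Integrable (fun ω => μv (h ω) a * μv (h ω) b * μv (h ω) c
      + μv (h ω) a * μv (h ω) b * z ω c + μv (h ω) a * μv (h ω) c * z ω b
      + μv (h ω) b * μv (h ω) c * z ω a) ℙ := s3.add i4
  have s5 : Integrable (fun ω => μv (h ω) a * μv (h ω) b * μv (h ω) c
      + μv (h ω) a * μv (h ω) b * z ω c + μv (h ω) a * μv (h ω) c * z ω b
      + μv (h ω) b * μv (h ω) c * z ω a + μv (h ω) a * (z ω b * z ω c)) ℙ := s4.add i5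
  have s6 : Integrable (fun ω => μv (h ω) a * μv (h ω) b * μv (h ω) c
      + μv (h ω) a * μv (h ω) b * z ω c + μv (h ω) a * μv (h ω) c * z ω b
      + μv (h ω) b * μv (h ω) c * z ω a + μv (h ω) a * (z ω b * z ω c)
      + μv (h ω) b * (z ω a * z ω c)) ℙ := s5.add i6
  have s7 : Integrable (fun ω => μv (h ω) a * μv (h ω) b * μv (h ω) c
      + μv (h ω) a * μv (h ω) b * z ω c + μv (h ω) a * μv (h ω) c * z ω b
      + μv (h ω) b * μv (h ω) c * z ω a + μv (h ω) a * (z ω b * z ω c)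
      + μv (h ω) b * (z ω a * z ω c) + μv (h ω) c * (z ω a * z ω b)) ℙ := s6.add i7
  simp only [hx, Pi.add_apply, e]
  rw [integral_add s7 i8,
    integral_add s6 i7,
    integral_add s5 i6,
    integral_add s4 i5,
    integral_add s3 i4,
    integral_add s2 i3,
    integral_add i1 i2,
    t1, t2, t3, t4, t5, t6, t7,
    zthird hσ hzm hzlaw hziid a b c,
    zmean hσ hzm hzlaw a, zmean hσ hzm hzlaw b, zmean hσ hzm hzlaw c,
    zcov hσ hzm hzlaw hziid b c, zcov hσ hzm hzlaw hziid a c, zcov hσ hzm hzlaw hziid a b]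
  split_ifs <;> ring

end moments

end Stmt1Aux

open Stmt1Aux in
/-- **Mixture of spherical Gaussians with common covariance: moment structure.**
`x = μ_h + z` with `P[h = i] = w i` and `z` an independent Gaussian vector with i.i.d.
`N(0,σ²)` coordinates.  Then `σ²` is the smallest eigenvalue of the covariance matrix
`E[x xᵀ] - E[x] E[x]ᵀ`, and the adjusted second and third moments are
`∑ i, w i • μ i ⊗ μ i` and `∑ i, w i • μ i ⊗ μ i ⊗ μ i`. -/
theorem stmt1 (k d : ℕ) (hk : 1 ≤ k) (hkd : k ≤ d) (σ : ℝ) (hσ : 0 < σ)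
    (w : Fin k → ℝ) (hw : ∀ i, 0 < w i) (hw1 : ∑ i, w i = 1)
    (μv : Fin k → Fin d → ℝ)
    {Ω : Type*} [MeasureSpace Ω] [IsProbabilityMeasure (ℙ : Measure Ω)]
    (h : Ω → Fin k) (hh : Measurable h)
    (hlaw : ∀ i, (ℙ : Measure Ω) {ω | h ω = i} = ENNReal.ofReal (w i))
    (z : Ω → Fin d → ℝ) (hzm : ∀ i, Measurable fun ω => z ω i)
    (hziid : iIndepFun (fun i ω => z ω i) ℙ)
    (hzlaw : ∀ i, Measure.map (fun ω => z ω i) ℙ = gaussianReal 0 ⟨σ ^ 2, sq_nonneg σ⟩)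
    (hindep : IndepFun h z ℙ)
    (x : Ω → Fin d → ℝ) (hx : ∀ ω, x ω = μv (h ω) + z ω) :
    IsLeast {t : ℝ | ∃ u : Fin d → ℝ, u ≠ 0 ∧
        (Matrix.of fun a b : Fin d =>
          (∫ ω, x ω a * x ω b) - (∫ ω, x ω a) * (∫ ω, x ω b)).mulVec u = t • u}
      (σ ^ 2) ∧
    (∀ a b : Fin d,
      (∫ ω, x ω a * x ω b) - σ ^ 2 * (if a = b then 1 else 0)
        = ∑ i, w i * (μv i a * μv i b)) ∧
    (∀ a b c : Fin d,
      (∫ ω, x ω a * x ω b * x ω c)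
          - σ ^ 2 * ((∫ ω, x ω a) * (if b = c then 1 else 0)
            + (∫ ω, x ω b) * (if a = c then 1 else 0)
            + (∫ ω, x ω c) * (if a = b then 1 else 0))
        = ∑ i, w i * (μv i a * μv i b * μv i c)) := by
  have hE1 : ∀ a, (∫ ω, x ω a) = ∑ i, w i * μv i a :=
    fun a => E1 σ hσ hw hh hlaw hzm hziid hzlaw hindep hx a
  have hE2 := fun a b => E2 σ hσ hw hh hlaw hzm hziid hzlaw hindep hx a b
  have hE3 := fun a b c => E3 σ hσ hw hh hlaw hzm hziid hzlaw hindep hx a b c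
  refine ⟨?_, fun a b => by rw [hE2]; ring, fun a b c => by
    rw [hE3, hE1 a, hE1 b, hE1 c]; ring⟩
  -- Part 1: IsLeast
  set m : Fin d → ℝ := fun a => ∑ i, w i * μv i a with hm_def
  have hma : ∀ a, (∑ i, w i * μv i a) = m a := fun a => rfl
  have hzero : ∀ a, ∑ i, w i * (μv i a - m a) = 0 := by
    intro a
    have e : ∀ i ∈ Finset.univ, w i * (μv i a - m a) = w i * μv i a - m a * w i :=
      fun i _ => by ring
    rw [Finset.sum_congr rfl e, Finset.sum_sub_distrib, ← Finset.mul_sum, hw1, mul_one,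
      hma a, sub_self]
  have expand : ∀ a b : Fin d, ∑ i, w i * ((μv i a - m a) * (μv i b - m b))
      = ∑ i, w i * (μv i a * μv i b) - m a * m b := by
    intro a b
    have e : ∀ i ∈ Finset.univ, w i * ((μv i a - m a) * (μv i b - m b))
        = w i * (μv i a * μv i b) - (w i * μv i a) * m b - (w i * μv i b) * m a
          + (m a * m b) * w i := fun i _ => by ring
    rw [Finset.sum_congr rfl e, Finset.sum_add_distrib, Finset.sum_sub_distrib,
      Finset.sum_sub_distrib, ← Finset.sum_mul, ← Finset.sum_mul, ← Finset.mul_sum, hw1,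
      mul_one, hma a, hma b]
    ring
  have key : ∀ a b : Fin d, (∫ ω, x ω a * x ω b) - (∫ ω, x ω a) * (∫ ω, x ω b)
      = (if a = b then σ ^ 2 else 0) + ∑ i, w i * ((μv i a - m a) * (μv i b - m b)) := by
    intro a b
    rw [hE2 a b, hE1 a, hE1 b, expand a b, hma a, hma b]
    split_ifs <;> ring
  have hMV : ∀ (u : Fin d → ℝ) (a : Fin d),
      (Matrix.of fun a b : Fin d =>
        (∫ ω, x ω a * x ω b) - (∫ ω, x ω a) * (∫ ω, x ω b)).mulVec u a
      = σ ^ 2 * u a + ∑ i, w i * ((μv i a - m a) * (∑ b, (μv i b - m b) * u b)) := by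
    intro u a
    have step1 : (Matrix.of fun a b : Fin d =>
        (∫ ω, x ω a * x ω b) - (∫ ω, x ω a) * (∫ ω, x ω b)).mulVec u a
        = ∑ b, ((if a = b then σ ^ 2 else 0)
            + ∑ i, w i * ((μv i a - m a) * (μv i b - m b))) * u b := by
      simp only [Matrix.mulVec, dotProduct, Matrix.of_apply]
      exact Finset.sum_congr rfl fun b _ => by rw [key a b]
    rw [step1]
    have split : ∀ b ∈ Finset.univ, ((if a = b then σ ^ 2 else 0)
        + ∑ i, w i * ((μv i a - m a) * (μv i b - m b))) * u b
        = (if a = b then σ ^ 2 * u b else 0)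
          + ∑ i, (w i * ((μv i a - m a) * (μv i b - m b))) * u b :=
      fun b _ => by rw [add_mul, Finset.sum_mul, ite_mul, zero_mul]
    rw [Finset.sum_congr rfl split, Finset.sum_add_distrib, Finset.sum_ite_eq,
      if_pos (Finset.mem_univ a), Finset.sum_comm]
    congr 1
    refine Finset.sum_congr rfl fun i _ => ?_
    have e : ∀ b ∈ Finset.univ, (w i * ((μv i a - m a) * (μv i b - m b))) * u b
        = w i * ((μv i a - m a) * ((μv i b - m b) * u b)) := fun b _ => by ring
    rw [Finset.sum_congr rfl e, ← Finset.mul_sum, ← Finset.mul_sum]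
  constructor
  · -- membership : σ² is attained
    set L : (Fin d → ℝ) →ₗ[ℝ] (Fin k → ℝ) :=
      Matrix.mulVecLin (Matrix.of fun i a => μv i a - m a) with hL_def
    have hLi : ∀ (u : Fin d → ℝ) (i : Fin k), L u i = ∑ a, (μv i a - m a) * u a := by
      intro u i
      simp [hL_def, Matrix.mulVecLin_apply, Matrix.mulVec, dotProduct,
        Matrix.of_apply]
    set φ : (Fin k → ℝ) →ₗ[ℝ] ℝ :=
      { toFun := fun y => ∑ i, w i * y i
        map_add' := by
          intro y y'
          simp only [Pi.add_apply, mul_add]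
          rw [Finset.sum_add_distrib]
        map_smul' := by
          intro c y
          simp only [Pi.smul_apply, smul_eq_mul, RingHom.id_apply]
          rw [Finset.mul_sum]
          exact Finset.sum_congr rfl fun i _ => by ring } with hφ_def
    have hrange : LinearMap.range L ≤ LinearMap.ker φ := by
      rintro _ ⟨u, rfl⟩
      rw [LinearMap.mem_ker]
      show ∑ i, w i * L u i = 0
      calc ∑ i, w i * L u i = ∑ i, ∑ a, w i * ((μv i a - m a) * u a) := by
            refine Finset.sum_congr rfl fun i _ => ?_
            rw [hLi u i, Finset.mul_sum]
        _ = ∑ a, ∑ i, w i * ((μv i a - m a) * u a) := Finset.sum_comm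
        _ = ∑ a, (∑ i, w i * (μv i a - m a)) * u a := by
            refine Finset.sum_congr rfl fun a _ => ?_
            rw [Finset.sum_mul]
            exact Finset.sum_congr rfl fun i _ => by ring
        _ = 0 := by simp [hzero]
    have hφtop : LinearMap.ker φ ≠ ⊤ := by
      intro htop
      have h1 : φ (fun _ => 1) = 0 := by
        have : (fun _ => (1:ℝ)) ∈ LinearMap.ker φ := htop ▸ Submodule.mem_top
        exact LinearMap.mem_ker.mp this
      have h2 : ∑ i, w i * (1:ℝ) = 0 := h1
      simp only [mul_one, hw1] at h2
      exact one_ne_zero h2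
    have hk1 : Module.finrank ℝ (LinearMap.ker φ) < k := by
      have := Submodule.finrank_lt hφtop
      rwa [Module.finrank_fintype_fun_eq_card, Fintype.card_fin] at this
    have hrankL : Module.finrank ℝ (LinearMap.range L) < k :=
      lt_of_le_of_lt (Submodule.finrank_mono hrange) hk1
    have hrn := LinearMap.finrank_range_add_finrank_ker L
    rw [Module.finrank_fintype_fun_eq_card, Fintype.card_fin] at hrn
    have hkerpos : LinearMap.ker L ≠ ⊥ := by
      intro hbot
      rw [hbot, finrank_bot] at hrn
      omega
    obtain ⟨u, huker, hu0⟩ := Submodule.exists_mem_ne_zero_of_ne_bot hkerpos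
    have hLu : ∀ i, ∑ a, (μv i a - m a) * u a = 0 := by
      intro i
      have h0 : L u = 0 := LinearMap.mem_ker.mp huker
      have := congrFun h0 i
      rwa [hLi u i] at this
    refine ⟨u, hu0, funext fun a => ?_⟩
    rw [hMV u a]
    simp only [hLu, mul_zero, Finset.sum_const_zero, add_zero, Pi.smul_apply, smul_eq_mul]
  · -- lower bound
    rintro t ⟨u, hu0, hEq⟩
    have hS : 0 < ∑ a, u a * u a := by
      obtain ⟨a, ha⟩ := Function.ne_iff.mp hu0
      refine Finset.sum_pos' (fun b _ => mul_self_nonneg _) ⟨a, Finset.mem_univ a, ?_⟩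
      exact mul_self_pos.mpr ha
    have hQ1 : ∑ a, (Matrix.of fun a b : Fin d =>
        (∫ ω, x ω a * x ω b) - (∫ ω, x ω a) * (∫ ω, x ω b)).mulVec u a * u a
        = t * ∑ a, u a * u a := by
      rw [hEq, Finset.mul_sum]
      exact Finset.sum_congr rfl fun a _ => by
        simp only [Pi.smul_apply, smul_eq_mul]; ring
    have hQ2 : ∑ a, (Matrix.of fun a b : Fin d =>
        (∫ ω, x ω a * x ω b) - (∫ ω, x ω a) * (∫ ω, x ω b)).mulVec u a * u a
        = σ ^ 2 * (∑ a, u a * u a)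
          + ∑ i, w i * ((∑ b, (μv i b - m b) * u b) * (∑ b, (μv i b - m b) * u b)) := by
      have e1 : ∀ a ∈ Finset.univ, (Matrix.of fun a b : Fin d =>
          (∫ ω, x ω a * x ω b) - (∫ ω, x ω a) * (∫ ω, x ω b)).mulVec u a * u a
          = σ ^ 2 * (u a * u a)
            + ∑ i, (w i * ((μv i a - m a) * (∑ b, (μv i b - m b) * u b))) * u a := by
        intro a _
        rw [hMV u a, add_mul, Finset.sum_mul, mul_assoc]
      rw [Finset.sum_congr rfl e1, Finset.sum_add_distrib, ← Finset.mul_sum,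
        Finset.sum_comm]
      congr 1
      refine Finset.sum_congr rfl fun i _ => ?_
      have e2 : ∀ a ∈ Finset.univ, (w i * ((μv i a - m a) * (∑ b, (μv i b - m b) * u b))) * u a
          = (w i * (∑ b, (μv i b - m b) * u b)) * ((μv i a - m a) * u a) := fun a _ => by ring
      rw [Finset.sum_congr rfl e2, ← Finset.mul_sum]
      ring
    have hNN : 0 ≤ ∑ i, w i * ((∑ b, (μv i b - m b) * u b) * (∑ b, (μv i b - m b) * u b)) :=
      Finset.sum_nonneg fun i _ => mul_nonneg (hw i).le (mul_self_nonneg _)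
    have hts : t * (∑ a, u a * u a) = σ ^ 2 * (∑ a, u a * u a)
        + ∑ i, w i * ((∑ b, (μv i b - m b) * u b) * (∑ b, (μv i b - m b) * u b)) := by
      rw [← hQ1, hQ2]
    nlinarith [hS, hNN, hts]
end

section
/- Let (Ω, P) be a probability space, h : Ω → [k] a random variable with P[h = j] = w_j, and for t ∈ {1,2,3} let x_t : Ω → ℝ^{d_t} be bounded measurable random vectors. Assume x₁, x₂, x₃ are conditionally independent given h, in the sense that for all j ∈ [k] and all bounded measurable functions f_t : ℝ^{d_t} → ℝ (t = 1,2,3): E[f₁(x₁)f₂(x₂)f₃(x₃)·1{h=j}]·P[h=j]² = E[f₁(x₁)·1{h=j}]·E[f₂(x₂)·1{h=j}]·E[f₃(x₃)·1{h=j}]. Assume further that E[x_t·1{h=j}] = w_j·μ_{t,j} for all t and j, where μ_{t,j} ∈ ℝ^{d_t}. Then for all t ≠ t' in {1,2,3}, E[x_t ⊗ x_{t'}] = Σ_{i=1}^k w_i μ_{t,i} ⊗ μ_{t',i} (entrywise: E[(x_t)_a (x_{t'})_b] = Σ_i w_i (μ_{t,i})_a (μ_{t',i})_b), and E[x₁ ⊗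 x₂ ⊗ x₃] = Σ_{i=1}^k w_i μ_{1,i} ⊗ μ_{2,i} ⊗ μ_{3,i}. -/
open scoped BigOperators
open MeasureTheory ProbabilityTheory

lemma aux_integrable {Ω : Type*} [MeasureSpace Ω] [IsFiniteMeasure (ℙ : Measure Ω)]
    {g : Ω → ℝ} (hg : Measurable g) {C : ℝ} (hC : ∀ ω, |g ω| ≤ C) :
    Integrable g := by
  refine ⟨hg.aestronglyMeasurable, ?_⟩
  exact HasFiniteIntegral.of_bounded (C := C)
    (Filter.Eventually.of_forall fun ω => by simpa [Real.norm_eq_abs] using hC ω)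

lemma aux_ind_int {Ω : Type*} [MeasureSpace Ω] [IsProbabilityMeasure (ℙ : Measure Ω)]
    {k : ℕ} (h : Ω → Fin k) (hh : Measurable h) (j : Fin k) {wj : ℝ} (hwj : 0 ≤ wj)
    (hlaw : (ℙ : Measure Ω) {ω | h ω = j} = ENNReal.ofReal wj) :
    ∫ ω, (if h ω = j then (1:ℝ) else 0) = wj := by
  have hs : MeasurableSet {ω | h ω = j} := hh (measurableSet_singleton j)
  have : (fun ω => if h ω = j then (1:ℝ) else 0) = Set.indicator {ω | h ω = j} 1 := by
    funext ω; simp [Set.indicator_apply]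
  rw [this, MeasureTheory.integral_indicator_one hs, measureReal_def, hlaw, ENNReal.toReal_ofReal hwj]

lemma aux_zero {Ω : Type*} [MeasureSpace Ω] [IsProbabilityMeasure (ℙ : Measure Ω)]
    {k : ℕ} (h : Ω → Fin k) (j : Fin k)
    (hlaw : (ℙ : Measure Ω) {ω | h ω = j} = 0) (g : Ω → ℝ) :
    ∫ ω, g ω * (if h ω = j then 1 else 0) = 0 := by
  have hae : ∀ᵐ ω, h ω ≠ j := by
    rw [MeasureTheory.ae_iff]; simpa using hlaw
  rw [show (0:ℝ) = ∫ (_ : Ω), (0:ℝ) by simp]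
  apply integral_congr_ae
  filter_upwards [hae] with ω hω
  simp [hω]

lemma aux_decomp {Ω : Type*} [MeasureSpace Ω] [IsProbabilityMeasure (ℙ : Measure Ω)]
    {k : ℕ} (h : Ω → Fin k) (hh : Measurable h) (g : Ω → ℝ) (hg : Measurable g)
    {C : ℝ} (hC : ∀ ω, |g ω| ≤ C) :
    ∫ ω, g ω = ∑ j, ∫ ω, g ω * (if h ω = j then 1 else 0) := by
  have hpt : ∀ ω, g ω = ∑ j, g ω * (if h ω = j then 1 else 0) := by
    intro ω
    simp [mul_ite, Finset.sum_ite_eq]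
  rw [show (fun ω => g ω) = fun ω => ∑ j, g ω * (if h ω = j then 1 else 0) from funext hpt]
  apply integral_finset_sum
  intro j _
  apply aux_integrable
  · exact hg.mul (Measurable.ite (hh (measurableSet_singleton j)) measurable_const measurable_const)
  · intro ω
    calc |g ω * (if h ω = j then 1 else 0)| ≤ |g ω| * 1 := by
          rw [abs_mul]
          exact mul_le_mul_of_nonneg_left (by split <;> simp) (abs_nonneg _)
      _ ≤ C := by simpa using hC ω

noncomputable def clv {n : ℕ} (B : ℝ) (i : Fin n) (v : Fin n → ℝ) : ℝ :=
  max (-B) (min B (v i))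

lemma clv_meas {n : ℕ} (B : ℝ) (i : Fin n) : Measurable (clv B i) :=
  measurable_const.max (measurable_const.min (measurable_pi_apply i))

lemma clv_bdd {n : ℕ} {B : ℝ} (hB : 0 ≤ B) (i : Fin n) (v : Fin n → ℝ) : |clv B i v| ≤ B := by
  rw [abs_le]
  exact ⟨le_max_left _ _, max_le (by linarith) ((min_le_left _ _))⟩

lemma clv_eq {n : ℕ} {B : ℝ} (i : Fin n) {v : Fin n → ℝ} (hv : |v i| ≤ B) :
    clv B i v = v i := by
  rw [abs_le] at hv
  unfold clv
  rw [min_eq_right hv.2, max_eq_right hv.1]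

/-- **Multi-view (naïve Bayes) model: cross moment structure.**
A hidden label `h ∈ [k]` with `P[h = j] = w j`, and three bounded observed random vectors
`x₁, x₂, x₃` that are conditionally independent given `h`, with conditional means
`μ_{t,j}` (encoded via `E[x_t · 1{h=j}] = w j • μ_{t,j}`).  Then the pairwise cross moments
are `∑ i, w i • μ_{t,i} ⊗ μ_{t',i}` and the triple cross moment is
`∑ i, w i • μ_{1,i} ⊗ μ_{2,i} ⊗ μ_{3,i}`. -/
theorem stmt2 (k : ℕ) (d : Fin 3 → ℕ)
    {Ω : Type*} [MeasureSpace Ω] [IsProbabilityMeasure (ℙ : Measure Ω)]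
    (w : Fin k → ℝ) (hw0 : ∀ j, 0 ≤ w j) (h : Ω → Fin k) (hh : Measurable h)
    (hlaw : ∀ j, (ℙ : Measure Ω) {ω | h ω = j} = ENNReal.ofReal (w j))
    (x : ∀ t : Fin 3, Ω → Fin (d t) → ℝ)
    (hmeas : ∀ t, Measurable (x t))
    (hbdd : ∀ t, ∃ C : ℝ, ∀ ω i, |x t ω i| ≤ C)
    (μv : ∀ t : Fin 3, Fin k → Fin (d t) → ℝ)
    (hci : ∀ (j : Fin k) (f : ∀ t : Fin 3, (Fin (d t) → ℝ) → ℝ),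
      (∀ t, Measurable (f t)) → (∀ t, ∃ C : ℝ, ∀ v, |f t v| ≤ C) →
      (∫ ω, (f 0 (x 0 ω) * f 1 (x 1 ω) * f 2 (x 2 ω)) * (if h ω = j then 1 else 0))
          * (w j) ^ 2
        = (∫ ω, f 0 (x 0 ω) * (if h ω = j then 1 else 0))
          * (∫ ω, f 1 (x 1 ω) * (if h ω = j then 1 else 0))
          * (∫ ω, f 2 (x 2 ω) * (if h ω = j then 1 else 0)))
    (hmean : ∀ (t : Fin 3) (j : Fin k) (i : Fin (d t)),
      ∫ ω, x t ω i * (if h ω = j then 1 else 0) = w j * μv t j i) :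
    (∀ t t' : Fin 3, t ≠ t' → ∀ (a : Fin (d t)) (b : Fin (d t')),
      ∫ ω, x t ω a * x t' ω b = ∑ i, w i * (μv t i a * μv t' i b)) ∧
    (∀ (a : Fin (d 0)) (b : Fin (d 1)) (c : Fin (d 2)),
      ∫ ω, x 0 ω a * x 1 ω b * x 2 ω c
        = ∑ i, w i * (μv 0 i a * μv 1 i b * μv 2 i c)) := by
  -- nonnegative bounds
  have hBex : ∀ t : Fin 3, ∃ B : ℝ, 0 ≤ B ∧ ∀ ω i, |x t ω i| ≤ B := by
    intro t; obtain ⟨C, hC⟩ := hbdd t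
    exact ⟨max C 0, le_max_right _ _, fun ω i => (hC ω i).trans (le_max_left _ _)⟩
  choose B hB0 hBx using hBex
  have hxm : ∀ (t : Fin 3) (i : Fin (d t)), Measurable fun ω => x t ω i :=
    fun t i => (measurable_pi_apply i).comp (hmeas t)
  have hind : ∀ j, ∫ ω, (if h ω = j then (1:ℝ) else 0) = w j := fun j =>
    aux_ind_int h hh j (hw0 j) (hlaw j)
  have hzero : ∀ (j : Fin k), w j = 0 → ∀ g : Ω → ℝ,
      ∫ ω, g ω * (if h ω = j then 1 else 0) = 0 := fun j hj g =>
    aux_zero h j (by rw [hlaw j, hj, ENNReal.ofReal_zero]) g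
  have hclv : ∀ (t : Fin 3) (i : Fin (d t)) (ω : Ω), clv (B t) i (x t ω) = x t ω i :=
    fun t i ω => clv_eq i (hBx t ω i)
  -- per-label triple identity
  have T : ∀ (j : Fin k) (a : Fin (d 0)) (b : Fin (d 1)) (c : Fin (d 2)),
      ∫ ω, (x 0 ω a * x 1 ω b * x 2 ω c) * (if h ω = j then 1 else 0)
        = w j * (μv 0 j a * μv 1 j b * μv 2 j c) := by
    intro j a b c
    by_cases hj : w j = 0
    · rw [hzero j hj (fun ω => x 0 ω a * x 1 ω b * x 2 ω c), hj, zero_mul]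
    · let f : ∀ t : Fin 3, (Fin (d t) → ℝ) → ℝ := fun t => match t with
        | 0 => clv (B 0) a
        | 1 => clv (B 1) b
        | 2 => clv (B 2) c
      have hfm : ∀ t, Measurable (f t) := by
        intro t; fin_cases t <;> exact clv_meas _ _
      have hfb : ∀ t, ∃ C : ℝ, ∀ v, |f t v| ≤ C := by
        intro t; fin_cases t <;> exact ⟨_, fun v => clv_bdd (hB0 _) _ v⟩
      have heq := hci j f hfm hfb
      simp only [show f 0 = clv (B 0) a from rfl, show f 1 = clv (B 1) b from rfl,
        show f 2 = clv (B 2) c from rfl, hclv] at heq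
      rw [hmean 0 j a, hmean 1 j b, hmean 2 j c] at heq
      apply mul_right_cancel₀ (pow_ne_zero 2 hj)
      rw [heq]; ring
  -- per-label pairwise identities
  have P01j : ∀ (j : Fin k) (a : Fin (d 0)) (b : Fin (d 1)),
      ∫ ω, (x 0 ω a * x 1 ω b) * (if h ω = j then 1 else 0)
        = w j * (μv 0 j a * μv 1 j b) := by
    intro j a b
    by_cases hj : w j = 0
    · rw [hzero j hj (fun ω => x 0 ω a * x 1 ω b), hj, zero_mul]
    · let f : ∀ t : Fin 3, (Fin (d t) → ℝ) → ℝ := fun t => match t with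
        | 0 => clv (B 0) a
        | 1 => clv (B 1) b
        | 2 => fun _ => (1:ℝ)
      have hfm : ∀ t, Measurable (f t) := by
        intro t; fin_cases t
        · exact clv_meas _ _
        · exact clv_meas _ _
        · exact measurable_const
      have hfb : ∀ t, ∃ C : ℝ, ∀ v, |f t v| ≤ C := by
        intro t; fin_cases t
        · exact ⟨_, fun v => clv_bdd (hB0 _) _ v⟩
        · exact ⟨_, fun v => clv_bdd (hB0 _) _ v⟩
        · exact ⟨1, fun v => by norm_num⟩
      have heq := hci j f hfm hfb
      simp only [show f 0 = clv (B 0) a from rfl, show f 1 = clv (B 1) b from rfl,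
        show f 2 = fun (_ : Fin (d 2) → ℝ) => (1:ℝ) from rfl, hclv, mul_one, one_mul] at heq
      rw [hmean 0 j a, hmean 1 j b, hind j] at heq
      apply mul_right_cancel₀ (pow_ne_zero 2 hj)
      rw [heq]; ring
  have P02j : ∀ (j : Fin k) (a : Fin (d 0)) (b : Fin (d 2)),
      ∫ ω, (x 0 ω a * x 2 ω b) * (if h ω = j then 1 else 0)
        = w j * (μv 0 j a * μv 2 j b) := by
    intro j a b
    by_cases hj : w j = 0
    · rw [hzero j hj (fun ω => x 0 ω a * x 2 ω b), hj, zero_mul]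
    · let f : ∀ t : Fin 3, (Fin (d t) → ℝ) → ℝ := fun t => match t with
        | 0 => clv (B 0) a
        | 1 => fun _ => (1:ℝ)
        | 2 => clv (B 2) b
      have hfm : ∀ t, Measurable (f t) := by
        intro t; fin_cases t
        · exact clv_meas _ _
        · exact measurable_const
        · exact clv_meas _ _
      have hfb : ∀ t, ∃ C : ℝ, ∀ v, |f t v| ≤ C := by
        intro t; fin_cases t
        · exact ⟨_, fun v => clv_bdd (hB0 _) _ v⟩
        · exact ⟨1, fun v => by norm_num⟩
        · exact ⟨_, fun v => clv_bdd (hB0 _) _ v⟩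
      have heq := hci j f hfm hfb
      simp only [show f 0 = clv (B 0) a from rfl,
        show f 1 = fun (_ : Fin (d 1) → ℝ) => (1:ℝ) from rfl,
        show f 2 = clv (B 2) b from rfl, hclv, mul_one, one_mul] at heq
      rw [hmean 0 j a, hmean 2 j b, hind j] at heq
      apply mul_right_cancel₀ (pow_ne_zero 2 hj)
      rw [heq]; ring
  have P12j : ∀ (j : Fin k) (a : Fin (d 1)) (b : Fin (d 2)),
      ∫ ω, (x 1 ω a * x 2 ω b) * (if h ω = j then 1 else 0)
        = w j * (μv 1 j a * μv 2 j b) := by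
    intro j a b
    by_cases hj : w j = 0
    · rw [hzero j hj (fun ω => x 1 ω a * x 2 ω b), hj, zero_mul]
    · let f : ∀ t : Fin 3, (Fin (d t) → ℝ) → ℝ := fun t => match t with
        | 0 => fun _ => (1:ℝ)
        | 1 => clv (B 1) a
        | 2 => clv (B 2) b
      have hfm : ∀ t, Measurable (f t) := by
        intro t; fin_cases t
        · exact measurable_const
        · exact clv_meas _ _
        · exact clv_meas _ _
      have hfb : ∀ t, ∃ C : ℝ, ∀ v, |f t v| ≤ C := by
        intro t; fin_cases t
        · exact ⟨1, fun v => by norm_num⟩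
        · exact ⟨_, fun v => clv_bdd (hB0 _) _ v⟩
        · exact ⟨_, fun v => clv_bdd (hB0 _) _ v⟩
      have heq := hci j f hfm hfb
      simp only [show f 0 = fun (_ : Fin (d 0) → ℝ) => (1:ℝ) from rfl,
        show f 1 = clv (B 1) a from rfl,
        show f 2 = clv (B 2) b from rfl, hclv, mul_one, one_mul] at heq
      rw [hmean 1 j a, hmean 2 j b, hind j] at heq
      apply mul_right_cancel₀ (pow_ne_zero 2 hj)
      rw [heq]; ring
  -- bounds for products
  have hbd2 : ∀ (t t' : Fin 3) (a : Fin (d t)) (b : Fin (d t')) (ω : Ω),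
      |x t ω a * x t' ω b| ≤ B t * B t' := by
    intro t t' a b ω
    rw [abs_mul]
    exact mul_le_mul (hBx t ω a) (hBx t' ω b) (abs_nonneg _) (hB0 t)
  -- global pairwise identities
  have P01 : ∀ (a : Fin (d 0)) (b : Fin (d 1)),
      ∫ ω, x 0 ω a * x 1 ω b = ∑ i, w i * (μv 0 i a * μv 1 i b) := by
    intro a b
    rw [aux_decomp h hh (fun ω => x 0 ω a * x 1 ω b) ((hxm 0 a).mul (hxm 1 b)) (hbd2 0 1 a b)]
    exact Finset.sum_congr rfl fun j _ => P01j j a b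
  have P02 : ∀ (a : Fin (d 0)) (b : Fin (d 2)),
      ∫ ω, x 0 ω a * x 2 ω b = ∑ i, w i * (μv 0 i a * μv 2 i b) := by
    intro a b
    rw [aux_decomp h hh (fun ω => x 0 ω a * x 2 ω b) ((hxm 0 a).mul (hxm 2 b)) (hbd2 0 2 a b)]
    exact Finset.sum_congr rfl fun j _ => P02j j a b
  have P12 : ∀ (a : Fin (d 1)) (b : Fin (d 2)),
      ∫ ω, x 1 ω a * x 2 ω b = ∑ i, w i * (μv 1 i a * μv 2 i b) := by
    intro a b
    rw [aux_decomp h hh (fun ω => x 1 ω a * x 2 ω b) ((hxm 1 a).mul (hxm 2 b)) (hbd2 1 2 a b)]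
    exact Finset.sum_congr rfl fun j _ => P12j j a b
  have P10 : ∀ (a : Fin (d 1)) (b : Fin (d 0)),
      ∫ ω, x 1 ω a * x 0 ω b = ∑ i, w i * (μv 1 i a * μv 0 i b) := by
    intro a b
    calc ∫ ω, x 1 ω a * x 0 ω b = ∫ ω, x 0 ω b * x 1 ω a := by
          congr 1; funext ω; ring
      _ = ∑ i, w i * (μv 0 i b * μv 1 i a) := P01 b a
      _ = ∑ i, w i * (μv 1 i a * μv 0 i b) := Finset.sum_congr rfl fun i _ => by ring
  have P20 : ∀ (a : Fin (d 2)) (b : Fin (d 0)),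
      ∫ ω, x 2 ω a * x 0 ω b = ∑ i, w i * (μv 2 i a * μv 0 i b) := by
    intro a b
    calc ∫ ω, x 2 ω a * x 0 ω b = ∫ ω, x 0 ω b * x 2 ω a := by
          congr 1; funext ω; ring
      _ = ∑ i, w i * (μv 0 i b * μv 2 i a) := P02 b a
      _ = ∑ i, w i * (μv 2 i a * μv 0 i b) := Finset.sum_congr rfl fun i _ => by ring
  have P21 : ∀ (a : Fin (d 2)) (b : Fin (d 1)),
      ∫ ω, x 2 ω a * x 1 ω b = ∑ i, w i * (μv 2 i a * μv 1 i b) := by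
    intro a b
    calc ∫ ω, x 2 ω a * x 1 ω b = ∫ ω, x 1 ω b * x 2 ω a := by
          congr 1; funext ω; ring
      _ = ∑ i, w i * (μv 1 i b * μv 2 i a) := P12 b a
      _ = ∑ i, w i * (μv 2 i a * μv 1 i b) := Finset.sum_congr rfl fun i _ => by ring
  constructor
  · intro t t' hne a b
    fin_cases t <;> fin_cases t'
    · exact absurd rfl hne
    · exact P01 a b
    · exact P02 a b
    · exact P10 a b
    · exact absurd rfl hne
    · exact P12 a b
    · exact P20 a b
    · exact P21 a b
    · exact absurd rfl hne
  · intro a b c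
    have hb3 : ∀ ω, |x 0 ω a * x 1 ω b * x 2 ω c| ≤ B 0 * B 1 * B 2 := by
      intro ω
      rw [abs_mul]
      exact mul_le_mul (hbd2 0 1 a b ω) (hBx 2 ω c) (abs_nonneg _)
        (mul_nonneg (hB0 0) (hB0 1))
    rw [aux_decomp h hh (fun ω => x 0 ω a * x 1 ω b * x 2 ω c)
      (((hxm 0 a).mul (hxm 1 b)).mul (hxm 2 c)) hb3]
    exact Finset.sum_congr rfl fun j _ => T j a b c
end

section
/- Fix k ≥ 1, weights w_1, …, w_k > 0, and for each t ∈ {1,2,3} vectors μ_{t,1}, …, μ_{t,k} ∈ ℝ^k that are linearly independent. For a, b ∈ {1,2,3} with a ≠ b define the k×k matrix P_{ab} := Σ_{i=1}^k w_i μ_{a,i} μ_{b,i}ᵀ. Then each P_{ab} is invertible; and setting C₁ := P_{32} P_{12}^{-1} and C₂ := P_{31} P_{21}^{-1}, the matrix M₂ := C₁ P_{12} C₂ᵀ and the trilinear form M₃(x, y, z) := Σ_{i=1}^k w_i ⟨C₁ μ_{1,i}, x⟩⟨C₂ μ_{2,i}, y⟩⟨μ_{3,i}, z⟩ satisfy M₂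 = Σ_{i=1}^k w_i μ_{3,i} μ_{3,i}ᵀ and M₃(x, y, z) = Σ_{i=1}^k w_i ⟨μ_{3,i}, x⟩⟨μ_{3,i}, y⟩⟨μ_{3,i}, z⟩ for all x, y, z ∈ ℝ^k. -/
open scoped BigOperators
open Matrix

/-- **Symmetrization of cross moments in the multi-view model.**
With pairwise cross-moment matrices `P a b = ∑ i, w i • μ_{a,i} μ_{b,i}ᵀ` (for `a ≠ b`),
each `P a b` is invertible, and with `C₁ = P₃₂ P₁₂⁻¹`, `C₂ = P₃₁ P₂₁⁻¹`, the symmetrized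
moments `M₂ = C₁ P₁₂ C₂ᵀ` and `M₃(x,y,z) = ∑ i, w i ⟨C₁ μ_{1,i}, x⟩⟨C₂ μ_{2,i}, y⟩⟨μ_{3,i}, z⟩`
equal `∑ i, w i • μ_{3,i} μ_{3,i}ᵀ` and `∑ i, w i ⟨μ_{3,i},x⟩⟨μ_{3,i},y⟩⟨μ_{3,i},z⟩`.
(Views `1,2,3` are indexed by `0,1,2 : Fin 3`.) -/
theorem stmt3 (k : ℕ) (hk : 1 ≤ k) (w : Fin k → ℝ) (hw : ∀ i, 0 < w i)
    (μ : Fin 3 → Fin k → Fin k → ℝ)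
    (hli : ∀ t, LinearIndependent ℝ (μ t))
    (P : Fin 3 → Fin 3 → Matrix (Fin k) (Fin k) ℝ)
    (hP : ∀ a b, P a b = ∑ i, w i • Matrix.vecMulVec (μ a i) (μ b i)) :
    (∀ a b : Fin 3, a ≠ b → IsUnit (P a b)) ∧
    ((P 2 1 * (P 0 1)⁻¹) * P 0 1 * (P 2 0 * (P 1 0)⁻¹)ᵀ
        = ∑ i, w i • Matrix.vecMulVec (μ 2 i) (μ 2 i)) ∧
    (∀ x y z : Fin k → ℝ,
      ∑ i, w i * (((P 2 1 * (P 0 1)⁻¹).mulVec (μ 0 i)) ⬝ᵥ x)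
            * (((P 2 0 * (P 1 0)⁻¹).mulVec (μ 1 i)) ⬝ᵥ y) * (μ 2 i ⬝ᵥ z)
        = ∑ i, w i * (μ 2 i ⬝ᵥ x) * (μ 2 i ⬝ᵥ y) * (μ 2 i ⬝ᵥ z)) := by
  set A : Fin 3 → Matrix (Fin k) (Fin k) ℝ := fun t => Matrix.of (μ t) with hA
  have hAunit : ∀ t, IsUnit (A t) := fun t =>
    Matrix.linearIndependent_rows_iff_isUnit.mp (hli t)
  have hAdet : ∀ t, IsUnit (A t).det := fun t =>
    (Matrix.isUnit_iff_isUnit_det _).mp (hAunit t)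
  have hdet : ∀ t, IsUnit ((A t)ᵀ).det := fun t => by
    rw [Matrix.det_transpose]; exact hAdet t
  have hfact : ∀ a b, P a b = (A a)ᵀ * Matrix.diagonal w * A b := by
    intro a b
    rw [hP]
    ext r c
    simp only [Matrix.sum_apply, Matrix.smul_apply, Matrix.vecMulVec_apply, smul_eq_mul,
      Matrix.mul_apply, Matrix.diagonal_apply, Matrix.transpose_apply, Finset.sum_mul,
      ite_mul, zero_mul, Finset.sum_ite_eq, Finset.mem_univ, if_true]
    refine Finset.sum_congr rfl fun i _ => ?_
    simp [A]; ring
  have hDdet : IsUnit (Matrix.diagonal w).det := by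
    rw [Matrix.det_diagonal]
    exact isUnit_iff_ne_zero.mpr (Finset.prod_ne_zero_iff.2 fun i _ => (hw i).ne')
  have hD : IsUnit (Matrix.diagonal w) := (Matrix.isUnit_iff_isUnit_det _).mpr hDdet
  have hATunit : ∀ t, IsUnit ((A t)ᵀ) := fun t => (Matrix.isUnit_iff_isUnit_det _).mpr (hdet t)
  have hPunit : ∀ a b, IsUnit (P a b) := by
    intro a b
    rw [hfact]
    exact ((hATunit a).mul hD).mul (hAunit b)
  have hC : ∀ s t u : Fin 3, P s t * (P u t)⁻¹ = (A s)ᵀ * ((A u)ᵀ)⁻¹ := by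
    intro s t u
    rw [hfact, hfact, Matrix.mul_inv_rev, Matrix.mul_inv_rev,
      Matrix.mul_assoc ((A s)ᵀ * Matrix.diagonal w), Matrix.mul_assoc,
      Matrix.mul_nonsing_inv_cancel_left _ _ (hAdet t),
      Matrix.mul_nonsing_inv_cancel_left _ _ hDdet]
  refine ⟨fun a b _ => hPunit a b, ?_, ?_⟩
  · rw [hC 2 1 0, hC 2 0 1, hfact 0 1]
    rw [Matrix.transpose_mul, Matrix.transpose_nonsing_inv, Matrix.transpose_transpose,
      Matrix.transpose_transpose]
    have : (A 2)ᵀ * ((A 0)ᵀ)⁻¹ * ((A 0)ᵀ * Matrix.diagonal w * A 1) * ((A 1)⁻¹ * A 2)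
        = (A 2)ᵀ * Matrix.diagonal w * A 2 := by
      rw [Matrix.mul_assoc ((A 2)ᵀ), ← Matrix.mul_assoc (((A 0)ᵀ)⁻¹),
        ← Matrix.mul_assoc (((A 0)ᵀ)⁻¹),
        Matrix.nonsing_inv_mul _ (hdet 0), Matrix.one_mul,
        ← Matrix.mul_assoc, ← Matrix.mul_assoc, Matrix.mul_assoc _ (A 1),
        Matrix.mul_nonsing_inv _ (hAdet 1), Matrix.mul_one]
    rw [this, ← hfact 2 2, hP]
  · intro x y z
    have hcol : ∀ (t : Fin 3) i, (A t)ᵀ.mulVec (Pi.single i 1) = μ t i := by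
      intro t i
      ext r
      simp [Matrix.mulVec_single, A]
    have hmv : ∀ s t : Fin 3, ∀ i, ((A s)ᵀ * ((A t)ᵀ)⁻¹).mulVec (μ t i) = μ s i := by
      intro s t i
      rw [← hcol t i, Matrix.mulVec_mulVec,
        Matrix.nonsing_inv_mul_cancel_right _ _ (hdet t), hcol s i]
    refine Finset.sum_congr rfl fun i _ => ?_
    rw [hC 2 1 0, hC 2 0 1, hmv 2 0 i, hmv 2 1 i]
end

section
/- Let k, d ≥ 1, let π ∈ ℝ^k be a probability vector, T ∈ ℝ^{k×k} a column-stochastic matrix (T_{i,j} ≥ 0, Σ_i T_{i,j} = 1), and O ∈ ℝ^{d×k}. On a probability space let y₁, y₂, y₃ : Ω → [k] have joint law P[(y₁,y₂,y₃) = (a,b,c)] = T_{c,b}·T_{b,a}·π_a, and let x₁, x₂, x₃ : Ω → ℝ^d be integrable random vectors such that for all (a,b,c) ∈ [k]³ and t ∈ {1,2,3}: E[x_t·1{(y₁,y₂,y₃)=(a,b,c)}] = P[(y₁,y₂,y₃)=(a,b,c)]·O e_{u_t}, where (u₁,u₂,u₃) := (a,b,c). Set w := Tπ and assume w_j > 0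 for all j. Then for all j ∈ [k]: E[x₁·1{y₂=j}] = w_j·O diag(π) Tᵀ diag(w)^{-1} e_j; E[x₂·1{y₂=j}] = w_j·O e_j; and E[x₃·1{y₂=j}] = w_j·O T e_j. Equivalently, E[x₁ | y₂=j] = O diag(π) Tᵀ diag(w)^{-1} e_j, E[x₂ | y₂=j] = O e_j, and E[x₃ | y₂=j] = O T e_j. -/
open scoped BigOperators
open MeasureTheory ProbabilityTheory Matrix

/-- **Hidden Markov model: conditional means of the three observations given `y₂`.**
For an HMM with initial distribution `π`, column-stochastic transition matrix `T`,
observation mean matrix `O` (i.e. `E[x_t | y_t = j] = O e_j`), and `w := Tπ` with positive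
entries, the three views satisfy `E[x₁ | y₂=j] = O diag(π) Tᵀ diag(w)⁻¹ e_j`,
`E[x₂ | y₂=j] = O e_j`, `E[x₃ | y₂=j] = O T e_j` (stated with the indicator of `{y₂ = j}`).
(Times `1,2,3` are indexed by `0,1,2 : Fin 3`.) -/
theorem stmt6 (k d : ℕ) (hk : 1 ≤ k)
    (π : Fin k → ℝ) (hπ0 : ∀ a, 0 ≤ π a) (hπ1 : ∑ a, π a = 1)
    (T : Matrix (Fin k) (Fin k) ℝ) (hT0 : ∀ i j, 0 ≤ T i j) (hT1 : ∀ j, ∑ i, T i j = 1)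
    (O : Matrix (Fin d) (Fin k) ℝ)
    {Ω : Type*} [MeasureSpace Ω] [IsProbabilityMeasure (ℙ : Measure Ω)]
    (y : Fin 3 → Ω → Fin k) (hy : ∀ t, Measurable (y t))
    (hjoint : ∀ a b c : Fin k,
      (ℙ : Measure Ω) {ω | y 0 ω = a ∧ y 1 ω = b ∧ y 2 ω = c}
        = ENNReal.ofReal (T c b * T b a * π a))
    (x : Fin 3 → Ω → Fin d → ℝ)
    (hint : ∀ t i, Integrable (fun ω => x t ω i) ℙ)
    (hcond : ∀ (a b c : Fin k) (t : Fin 3) (i : Fin d),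
      (∫ ω, if y 0 ω = a ∧ y 1 ω = b ∧ y 2 ω = c then x t ω i else 0)
        = (T c b * T b a * π a) * O i (![a, b, c] t))
    (w : Fin k → ℝ) (hw : w = T.mulVec π) (hwpos : ∀ j, 0 < w j) :
    ∀ (j : Fin k) (i : Fin d),
      ((∫ ω, if y 1 ω = j then x 0 ω i else 0)
        = w j * (O * Matrix.diagonal π * Tᵀ * (Matrix.diagonal w)⁻¹) i j) ∧
      ((∫ ω, if y 1 ω = j then x 1 ω i else 0) = w j * O i j) ∧
      ((∫ ω, if y 1 ω = j then x 2 ω i else 0) = w j * (O * T) i j) := by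
  intro j i
  have hwj : (∑ a, T j a * π a) = w j := by
    rw [hw]; simp [Matrix.mulVec, dotProduct]
  have hwne : w j ≠ 0 := (hwpos j).ne'
  -- measurability of joint events
  have hmeas : ∀ a c : Fin k, MeasurableSet {ω | y 0 ω = a ∧ y 1 ω = j ∧ y 2 ω = c} := by
    intro a c
    have : {ω | y 0 ω = a ∧ y 1 ω = j ∧ y 2 ω = c}
        = (y 0 ⁻¹' {a}) ∩ ((y 1 ⁻¹' {j}) ∩ (y 2 ⁻¹' {c})) := by
      ext ω; simp [Set.mem_preimage]
    rw [this]
    exact ((hy 0) (measurableSet_singleton a)).inter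
      (((hy 1) (measurableSet_singleton j)).inter ((hy 2) (measurableSet_singleton c)))
  -- key decomposition
  have key : ∀ t : Fin 3, (∫ ω, if y 1 ω = j then x t ω i else 0)
      = ∑ a, ∑ c, (T c j * T j a * π a) * O i (![a, j, c] t) := by
    intro t
    have hI : ∀ a c : Fin k,
        Integrable (fun ω => if y 0 ω = a ∧ y 1 ω = j ∧ y 2 ω = c then x t ω i else 0) ℙ := by
      intro a c
      refine ((hint t i).indicator (hmeas a c)).congr ?_
      refine Filter.Eventually.of_forall fun ω => ?_
      by_cases h : y 0 ω = a ∧ y 1 ω = j ∧ y 2 ω = c <;>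
        simp [Set.indicator_apply, Set.mem_setOf_eq, h]
    have hpt : ∀ ω, (if y 1 ω = j then x t ω i else 0)
        = ∑ a, ∑ c, (if y 0 ω = a ∧ y 1 ω = j ∧ y 2 ω = c then x t ω i else 0) := by
      intro ω
      have h1 : ∀ a : Fin k,
          (∑ c, if y 0 ω = a ∧ y 1 ω = j ∧ y 2 ω = c then x t ω i else 0)
          = if y 0 ω = a ∧ y 1 ω = j then x t ω i else 0 := by
        intro a
        rw [Finset.sum_eq_single (y 2 ω)]
        · by_cases h : y 0 ω = a ∧ y 1 ω = j <;> simp [h]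
        · intro c _ hc
          simp [(Ne.symm hc : y 2 ω ≠ c)]
        · simp
      simp_rw [h1]
      rw [Finset.sum_eq_single (y 0 ω)]
      · by_cases h : y 1 ω = j <;> simp [h]
      · intro a _ ha
        simp [(Ne.symm ha : y 0 ω ≠ a)]
      · simp
    calc (∫ ω, if y 1 ω = j then x t ω i else 0)
        = ∫ ω, ∑ a, ∑ c, (if y 0 ω = a ∧ y 1 ω = j ∧ y 2 ω = c then x t ω i else 0) := by
          exact integral_congr_ae (Filter.Eventually.of_forall hpt)
      _ = ∑ a, ∫ ω, ∑ c, (if y 0 ω = a ∧ y 1 ω = j ∧ y 2 ω = c then x t ω i else 0) := by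
          exact integral_finset_sum _ fun a _ => integrable_finset_sum _ fun c _ => hI a c
      _ = ∑ a, ∑ c, ∫ ω, (if y 0 ω = a ∧ y 1 ω = j ∧ y 2 ω = c then x t ω i else 0) := by
          exact Finset.sum_congr rfl fun a _ => integral_finset_sum _ fun c _ => hI a c
      _ = ∑ a, ∑ c, (T c j * T j a * π a) * O i (![a, j, c] t) := by
          exact Finset.sum_congr rfl fun a _ => Finset.sum_congr rfl fun c _ => hcond a j c t i
  refine ⟨?_, ?_, ?_⟩
  · -- t = 0
    rw [key 0]
    simp only [Matrix.cons_val_zero]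
    have hsum : (∑ a, ∑ c, (T c j * T j a * π a) * O i a)
        = ∑ a, O i a * π a * T j a := by
      have : ∀ a : Fin k, (∑ c, (T c j * T j a * π a) * O i a)
          = (O i a * π a * T j a) * (∑ c, T c j) := by
        intro a; rw [Finset.mul_sum]; exact Finset.sum_congr rfl fun c _ => by ring
      simp_rw [this, hT1 j, mul_one]
    rw [hsum]
    -- compute the matrix entry
    have hinv : (Matrix.diagonal w)⁻¹ = Matrix.diagonal (fun a => (w a)⁻¹) := by
      apply Matrix.inv_eq_right_inv
      rw [Matrix.diagonal_mul_diagonal]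
      convert Matrix.diagonal_one using 2
      exact funext fun a => mul_inv_cancel₀ (hwpos a).ne'
    rw [hinv, Matrix.mul_diagonal]
    have hentry : (O * Matrix.diagonal π * Tᵀ) i j = ∑ a, O i a * π a * T j a := by
      rw [Matrix.mul_apply]
      exact Finset.sum_congr rfl fun a _ => by
        rw [Matrix.mul_diagonal, Matrix.transpose_apply]
    rw [hentry]
    field_simp
  · -- t = 1
    rw [key 1]
    simp only [show ∀ a c : Fin k, ![a, j, c] 1 = j from fun a c => rfl]
    have : ∀ a : Fin k, (∑ c, (T c j * T j a * π a) * O i j)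
        = (T j a * π a * O i j) * (∑ c, T c j) := by
      intro a; rw [Finset.mul_sum]; exact Finset.sum_congr rfl fun c _ => by ring
    simp_rw [this, hT1 j, mul_one]
    rw [show (∑ a, T j a * π a * O i j) = (∑ a, T j a * π a) * O i j from
      (Finset.sum_mul _ _ _).symm, hwj]
  · -- t = 2
    rw [key 2]
    simp only [show ∀ a c : Fin k, ![a, j, c] 2 = c from fun a c => rfl]
    rw [Finset.sum_comm]
    have : ∀ c : Fin k, (∑ a, (T c j * T j a * π a) * O i c)
        = (O i c * T c j) * (∑ a, T j a * π a) := by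
      intro c; rw [Finset.mul_sum]; exact Finset.sum_congr rfl fun a _ => by ring
    simp_rw [this, hwj]
    rw [Matrix.mul_apply, Finset.mul_sum]
    exact Finset.sum_congr rfl fun c _ => by ring
end

section
/- Let μ_1, …, μ_k ∈ ℝ^d be linearly independent and w_1, …, w_k > 0. Set M₂ := Σ_{i=1}^k w_i μ_i μ_iᵀ and let M₃ be the symmetric trilinear form M₃(x,y,z) := Σ_{i=1}^k w_i ⟨μ_i,x⟩⟨μ_i,y⟩⟨μ_i,z⟩ on ℝ^d. Let W ∈ ℝ^{d×k} satisfy Wᵀ M₂ W = I_k, define μ̃_i := √(w_i)·Wᵀμ_i ∈ ℝ^k, and let M̃₃ be the tensor on ℝ^k given by M̃₃(x,y,z) := M₃(Wx, Wy, Wz). Then: (1) {μ̃_1, …, μ̃_k} is an orthonormal basis of ℝ^k and M̃₃ = Σ_{i=1}^k (1/√w_i)·μ̃_i^⊗3; (2) the set of robust eigenvectors of M̃₃ equals exactly {μ̃_1, …, μ̃_k}, and M̃₃(I, μ̃_i, μ̃_i) = (1/√w_i)·μ̃_i, i.e. the eigenvalue of the robust eigenvector μ̃_i equals 1/√w_i;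 (3) for each i, (1/√w_i)·M₂ W μ̃_i = μ_i; consequently, if (v, λ) is a robust eigenvector/eigenvalue pair of M̃₃, then λ·M₂ W v = μ_i for some i ∈ [k]. -/
open scoped BigOperators
open Matrix

noncomputable section

/-- Euclidean dot product on `ℝ^n`. -/
def dotp {n : ℕ} (u v : Fin n → ℝ) : ℝ := ∑ i, u i * v i

/-- Euclidean norm on `ℝ^n`. -/
def enorm' {n : ℕ} (u : Fin n → ℝ) : ℝ := Real.sqrt (∑ i, (u i) ^ 2)

/-- The second moment matrix `M₂ = ∑ i, w i • μ i μ iᵀ`. -/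
def M2 {d k : ℕ} (w : Fin k → ℝ) (μ : Fin k → Fin d → ℝ) : Matrix (Fin d) (Fin d) ℝ :=
  ∑ i, w i • Matrix.vecMulVec (μ i) (μ i)

/-- The trilinear form `M̃₃(x,y,z) := M₃(Wx, Wy, Wz)` where
`M₃(u₁,u₂,u₃) = ∑ i, w i ⟨μ i, u₁⟩⟨μ i, u₂⟩⟨μ i, u₃⟩`. -/
def M3til {d k : ℕ} (w : Fin k → ℝ) (μ : Fin k → Fin d → ℝ)
    (W : Matrix (Fin d) (Fin k) ℝ) (x y z : Fin k → ℝ) : ℝ :=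
  ∑ i, w i * dotp (μ i) (W.mulVec x) * dotp (μ i) (W.mulVec y) * dotp (μ i) (W.mulVec z)

/-- `M̃₃(I,u,u)`, the power iteration map of the whitened tensor. -/
def tmap3 {d k : ℕ} (w : Fin k → ℝ) (μ : Fin k → Fin d → ℝ)
    (W : Matrix (Fin d) (Fin k) ℝ) (u : Fin k → ℝ) : Fin k → ℝ :=
  fun j => M3til w μ W (Pi.single j 1) u u

/-- The power iteration sequence of a general map `Tm = T(I,·,·)`, started at `θ`. -/
def powSeqG {k : ℕ} (Tm : (Fin k → ℝ) → Fin k → ℝ) (θ : Fin k → ℝ) : ℕ → Fin k → ℝ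
  | 0 => θ
  | t + 1 => (enorm' (Tm (powSeqG Tm θ t)))⁻¹ • Tm (powSeqG Tm θ t)

/-- A unit vector `u` is a robust eigenvector of the tensor with power map `Tm` if all
power iteration sequences started in some ball around `u` are well defined and converge
to `u`. -/
def RobustEigG {k : ℕ} (Tm : (Fin k → ℝ) → Fin k → ℝ) (u : Fin k → ℝ) : Prop :=
  enorm' u = 1 ∧ ∃ ε > (0 : ℝ), ∀ θ : Fin k → ℝ, enorm' (θ - u) ≤ ε →
    (∀ t, Tm (powSeqG Tm θ t) ≠ 0) ∧
    Filter.Tendsto (powSeqG Tm θ) Filter.atTop (nhds u)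

/-- The whitened vectors `μ̃ i := √(w i) • Wᵀ μ i`. -/
def mutil {d k : ℕ} (w : Fin k → ℝ) (μ : Fin k → Fin d → ℝ)
    (W : Matrix (Fin d) (Fin k) ℝ) (i : Fin k) : Fin k → ℝ :=
  Real.sqrt (w i) • (Wᵀ.mulVec (μ i))



open Filter

-- ### Basic facts about `dotp` and `enorm'`

lemma dotp_smul_right {n : ℕ} (v : Fin n → ℝ) (a : ℝ) (x : Fin n → ℝ) :
    dotp v (a • x) = a * dotp v x := by
  simp only [dotp, Pi.smul_apply, smul_eq_mul, Finset.mul_sum]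
  exact Finset.sum_congr rfl fun i _ => by ring

lemma dotp_add_right {n : ℕ} (v x y : Fin n → ℝ) :
    dotp v (x + y) = dotp v x + dotp v y := by
  simp only [dotp, Pi.add_apply, mul_add, Finset.sum_add_distrib]

lemma dotp_zero_right {n : ℕ} (v : Fin n → ℝ) : dotp v (0 : Fin n → ℝ) = 0 := by
  simp [dotp]

lemma dotp_self_nonneg {n : ℕ} (v : Fin n → ℝ) : 0 ≤ dotp v v :=
  Finset.sum_nonneg fun i _ => mul_self_nonneg _

lemma enorm'_eq_sqrt_dotp {n : ℕ} (v : Fin n → ℝ) : enorm' v = Real.sqrt (dotp v v) := by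
  simp [enorm', dotp, sq]

lemma enorm'_nonneg {n : ℕ} (v : Fin n → ℝ) : 0 ≤ enorm' v := Real.sqrt_nonneg _

lemma sq_enorm' {n : ℕ} (v : Fin n → ℝ) : enorm' v ^ 2 = dotp v v := by
  rw [enorm'_eq_sqrt_dotp, Real.sq_sqrt (dotp_self_nonneg v)]

lemma enorm'_eq_zero_iff {n : ℕ} (v : Fin n → ℝ) : enorm' v = 0 ↔ v = 0 := by
  rw [enorm'_eq_sqrt_dotp, Real.sqrt_eq_zero (dotp_self_nonneg v)]
  constructor
  · intro h
    funext l
    have h2 := (Finset.sum_eq_zero_iff_of_nonneg (fun i _ => mul_self_nonneg (v i))).1 h l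
      (Finset.mem_univ l)
    simpa [mul_self_eq_zero] using h2
  · intro h; simp [h, dotp]

lemma enorm'_pos_of_ne {n : ℕ} (v : Fin n → ℝ) (h : v ≠ 0) : 0 < enorm' v :=
  lt_of_le_of_ne (enorm'_nonneg v) (fun e => h ((enorm'_eq_zero_iff v).1 e.symm))

lemma enorm'_smul {n : ℕ} (a : ℝ) (v : Fin n → ℝ) : enorm' (a • v) = |a| * enorm' v := by
  simp only [enorm', Pi.smul_apply, smul_eq_mul, mul_pow]
  rw [← Finset.mul_sum, Real.sqrt_mul (sq_nonneg a), Real.sqrt_sq_eq_abs]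

lemma dotp_single_right {n : ℕ} (v : Fin n → ℝ) (j : Fin n) :
    dotp v (Pi.single j 1) = v j := by
  simp [dotp, Pi.single_apply, mul_ite, Finset.sum_ite_eq']

lemma tendsto_dotp {n : ℕ} (v : Fin n → ℝ) {f : ℕ → Fin n → ℝ} {u : Fin n → ℝ}
    (hf : Filter.Tendsto f Filter.atTop (nhds u)) :
    Filter.Tendsto (fun t => dotp v (f t)) Filter.atTop (nhds (dotp v u)) := by
  have := tendsto_pi_nhds.1 hf
  simp only [dotp]
  exact tendsto_finset_sum _ fun m _ => (this m).const_mul (v m)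

section abs1
variable {k : ℕ} {ν : Fin k → Fin k → ℝ} {lam : Fin k → ℝ}
  {Tm : (Fin k → ℝ) → Fin k → ℝ}
  (horth : ∀ i j, dotp (ν i) (ν j) = if i = j then 1 else 0)
  (hcomp : ∀ (x : Fin k → ℝ) l, x l = ∑ i, dotp (ν i) x * ν i l)
  (hlam : ∀ i, 0 < lam i)
  (hTm : ∀ (u : Fin k → ℝ) l, dotp (ν l) (Tm u) = lam l * (dotp (ν l) u) ^ 2)

include hcomp in
lemma parseval (x y : Fin k → ℝ) :
    dotp x y = ∑ i, dotp (ν i) x * dotp (ν i) y :=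
  calc dotp x y = ∑ l, x l * y l := rfl
    _ = ∑ l, (∑ i, dotp (ν i) x * ν i l) * y l :=
        Finset.sum_congr rfl fun l _ => by rw [← hcomp x l]
    _ = ∑ l, ∑ i, dotp (ν i) x * (ν i l * y l) :=
        Finset.sum_congr rfl fun l _ => by
          rw [Finset.sum_mul]; exact Finset.sum_congr rfl fun i _ => by ring
    _ = ∑ i, ∑ l, dotp (ν i) x * (ν i l * y l) := Finset.sum_comm
    _ = ∑ i, dotp (ν i) x * dotp (ν i) y :=
        Finset.sum_congr rfl fun i _ => by rw [← Finset.mul_sum]; rfl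

include hlam hTm in
lemma Tm_ne_zero (u : Fin k → ℝ) (l : Fin k) (h : dotp (ν l) u ≠ 0) : Tm u ≠ 0 := by
  intro e
  have h1 := hTm u l
  rw [e, dotp_zero_right] at h1
  have hsq : 0 < dotp (ν l) u ^ 2 :=
    lt_of_le_of_ne (sq_nonneg _) (Ne.symm (pow_ne_zero 2 h))
  have h2 : 0 < lam l * dotp (ν l) u ^ 2 := mul_pos (hlam l) hsq
  linarith [h2, h1]

include hTm in
lemma coord_step (θ : Fin k → ℝ) (t : ℕ) (l : Fin k) :
    dotp (ν l) (powSeqG Tm θ (t+1))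
      = (enorm' (Tm (powSeqG Tm θ t)))⁻¹ * (lam l * (dotp (ν l) (powSeqG Tm θ t)) ^ 2) := by
  show dotp (ν l) ((enorm' (Tm (powSeqG Tm θ t)))⁻¹ • Tm (powSeqG Tm θ t)) = _
  rw [dotp_smul_right, hTm]

include hcomp in
lemma unit_next (x : Fin k → ℝ) (hx : Tm x ≠ 0) :
    ∑ l, (dotp (ν l) ((enorm' (Tm x))⁻¹ • Tm x)) ^ 2 = 1 := by
  have hn : enorm' (Tm x) ≠ 0 := ne_of_gt (enorm'_pos_of_ne _ hx)
  have h1 : ∑ l, (dotp (ν l) ((enorm' (Tm x))⁻¹ • Tm x)) ^ 2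
      = dotp ((enorm' (Tm x))⁻¹ • Tm x) ((enorm' (Tm x))⁻¹ • Tm x) := by
    rw [parseval hcomp]
    exact Finset.sum_congr rfl fun l _ => sq (dotp (ν l) ((enorm' (Tm x))⁻¹ • Tm x))
  rw [h1, dotp_smul_right]
  have h2 : dotp ((enorm' (Tm x))⁻¹ • Tm x) (Tm x) = (enorm' (Tm x))⁻¹ * dotp (Tm x) (Tm x) := by
    have : dotp ((enorm' (Tm x))⁻¹ • Tm x) (Tm x) = ∑ i, (enorm' (Tm x))⁻¹ * Tm x i * Tm x i := rfl
    rw [this, dotp, Finset.mul_sum]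
    exact Finset.sum_congr rfl fun i _ => by ring
  rw [h2, ← sq_enorm', sq]
  field_simp

lemma coord_sq_le_one {x : Fin k → ℝ} (hx : ∑ l, (dotp (ν l) x) ^ 2 = 1) (l : Fin k) :
    (dotp (ν l) x) ^ 2 ≤ 1 := by
  rw [← hx]
  exact Finset.single_le_sum (f := fun m => (dotp (ν m) x) ^ 2)
    (fun m _ => sq_nonneg _) (Finset.mem_univ l)

include hcomp in
lemma abs_dotp_le (l : Fin k) (x : Fin k → ℝ) : |dotp (ν l) x| ≤ enorm' x := by
  have h1 : (dotp (ν l) x) ^ 2 ≤ dotp x x := by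
    rw [parseval hcomp x x]
    calc (dotp (ν l) x) ^ 2 ≤ ∑ i, (dotp (ν i) x) ^ 2 :=
          Finset.single_le_sum (f := fun m => (dotp (ν m) x) ^ 2)
            (fun m _ => sq_nonneg _) (Finset.mem_univ l)
      _ = ∑ i, dotp (ν i) x * dotp (ν i) x := Finset.sum_congr rfl fun i _ => sq _
  calc |dotp (ν l) x| = Real.sqrt ((dotp (ν l) x) ^ 2) := (Real.sqrt_sq_eq_abs _).symm
    _ ≤ Real.sqrt (dotp x x) := Real.sqrt_le_sqrt h1
    _ = enorm' x := (enorm'_eq_sqrt_dotp x).symm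


-- the squared-ratio induction step, shared by both directions
include hTm in
lemma ratio_step (θ : Fin k → ℝ) (t : ℕ) (i j : Fin k) (q : ℝ) (hq0 : 0 ≤ q) (hq1 : q ≤ 1)
    (hn : Tm (powSeqG Tm θ t) ≠ 0)
    (hbd : |lam j * dotp (ν j) (powSeqG Tm θ t)| ≤ q ^ (t+1) * (lam i * dotp (ν i) (powSeqG Tm θ t))) :
    |lam j * dotp (ν j) (powSeqG Tm θ (t+1))|
      ≤ q ^ (t+2) * (lam i * dotp (ν i) (powSeqG Tm θ (t+1))) := by
  set n := enorm' (Tm (powSeqG Tm θ t)) with hndef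
  have hnpos : 0 < n := enorm'_pos_of_ne _ hn
  set a := lam j * dotp (ν j) (powSeqG Tm θ t)
  set b := lam i * dotp (ν i) (powSeqG Tm θ t)
  have e1 : lam j * dotp (ν j) (powSeqG Tm θ (t+1)) = n⁻¹ * a ^ 2 := by
    rw [coord_step hTm]; ring
  have e2 : lam i * dotp (ν i) (powSeqG Tm θ (t+1)) = n⁻¹ * b ^ 2 := by
    rw [coord_step hTm]; ring
  rw [e1, e2, abs_of_nonneg (by positivity)]
  have ha2 : a ^ 2 ≤ (q ^ (t+1)) ^ 2 * b ^ 2 := by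
    nlinarith [abs_nonneg a, sq_abs a, hbd]
  have hqq : ((q : ℝ) ^ (t+1)) ^ 2 ≤ q ^ (t+2) := by
    rw [← pow_mul]
    exact pow_le_pow_of_le_one hq0 hq1 (by omega)
  have h3 : a ^ 2 ≤ q ^ (t+2) * b ^ 2 :=
    le_trans ha2 (mul_le_mul_of_nonneg_right hqq (sq_nonneg b))
  calc n⁻¹ * a ^ 2 ≤ n⁻¹ * (q ^ (t+2) * b ^ 2) :=
        mul_le_mul_of_nonneg_left h3 (inv_nonneg.2 hnpos.le)
    _ = q ^ (t+2) * (n⁻¹ * b ^ 2) := by ring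

include horth hcomp hlam hTm in
lemma robustA (i : Fin k) : RobustEigG Tm (ν i) := by
  have hνunit : ∀ j : Fin k, dotp (ν j) (ν j) = 1 := fun j => by simpa using horth j j
  have hν1 : enorm' (ν i) = 1 := by
    rw [enorm'_eq_sqrt_dotp, hνunit i, Real.sqrt_one]
  refine ⟨hν1, ?_⟩
  have : Nonempty (Fin k) := ⟨i⟩
  set Λ : ℝ := ∑ l, lam l with hΛdef
  have hΛpos : 0 < Λ := Finset.sum_pos (fun l _ => hlam l) Finset.univ_nonempty
  have hΛle : ∀ l, lam l ≤ Λ := fun l =>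
    Finset.single_le_sum (fun m _ => (hlam m).le) (Finset.mem_univ l)
  refine ⟨min (1/2 : ℝ) (lam i / (4 * Λ)), lt_min (by norm_num) (div_pos (hlam i) (by linarith)), fun θ hθ => ?_⟩
  set ε := min (1/2 : ℝ) (lam i / (4 * Λ)) with hεdef
  set g := powSeqG Tm θ with hg
  set c : Fin k → ℕ → ℝ := fun l t => dotp (ν l) (g t) with hc
  have hδ : ∀ l, |dotp (ν l) (θ - ν i)| ≤ ε := fun l => le_trans (abs_dotp_le hcomp l _) hθ
  have h0 : ∀ l, c l 0 = (if l = i then (1:ℝ) else 0) + dotp (ν l) (θ - ν i) := by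
    intro l
    have e : ν i + (θ - ν i) = θ := by abel
    have : c l 0 = dotp (ν l) θ := rfl
    rw [this, ← e, dotp_add_right, horth l i]
    have e2 : ν i + (θ - ν i) - ν i = θ - ν i := by abel
    rw [e2]
  have hε12 : ε ≤ 1/2 := min_le_left _ _
  have hεΛ : Λ * ε ≤ lam i / 4 := by
    have h1 : ε ≤ lam i / (4 * Λ) := min_le_right _ _
    calc Λ * ε ≤ Λ * (lam i / (4 * Λ)) := mul_le_mul_of_nonneg_left h1 hΛpos.le
      _ = lam i / 4 := by field_simp
  have hci0 : (1/2 : ℝ) ≤ c i 0 := by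
    have := abs_le.1 (hδ i)
    rw [h0 i, if_pos rfl]; linarith
  have base : ∀ j, j ≠ i → |lam j * c j 0| ≤ (1/2 : ℝ) ^ (0+1) * (lam i * c i 0) := by
    intro j hj
    have h1 : |lam j * c j 0| = lam j * |dotp (ν j) (θ - ν i)| := by
      rw [h0 j, if_neg hj, zero_add, abs_mul, abs_of_pos (hlam j)]
    have h2 : lam j * |dotp (ν j) (θ - ν i)| ≤ Λ * ε :=
      mul_le_mul (hΛle j) (hδ j) (abs_nonneg _) hΛpos.le
    have hpow : ((1:ℝ)/2) ^ (0+1) = 1/2 := by norm_num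
    rw [hpow]
    have hmul : lam i * (1/2) ≤ lam i * c i 0 := mul_le_mul_of_nonneg_left hci0 (hlam i).le
    linarith [h1, h2, hεΛ, hmul]
  have key : ∀ t, 0 < c i t ∧ ∀ j, j ≠ i → |lam j * c j t| ≤ (1/2 : ℝ) ^ (t+1) * (lam i * c i t) := by
    intro t
    induction t with
    | zero => exact ⟨by linarith, base⟩
    | succ t ih =>
      obtain ⟨hpos, hbd⟩ := ih
      have hTne : Tm (g t) ≠ 0 := Tm_ne_zero hlam hTm (g t) i (ne_of_gt hpos)
      have hnpos : 0 < enorm' (Tm (g t)) := enorm'_pos_of_ne _ hTne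
      constructor
      · have e := coord_step hTm θ t i
        have : c i (t+1) = (enorm' (Tm (g t)))⁻¹ * (lam i * (c i t) ^ 2) := e
        rw [this]
        exact mul_pos (inv_pos.2 hnpos) (mul_pos (hlam i) (pow_pos hpos 2))
      · intro j hj
        exact ratio_step hTm θ t i j (1/2) (by norm_num) (by norm_num) hTne (hbd j hj)
  have hne : ∀ t, Tm (g t) ≠ 0 := fun t => Tm_ne_zero hlam hTm (g t) i (ne_of_gt (key t).1)
  have hunit : ∀ t, ∑ l, (c l (t+1)) ^ 2 = 1 := fun t => unit_next hcomp (g t) (hne t)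
  have hcile : ∀ t, c i (t+1) ≤ 1 := by
    intro t
    have h1 := coord_sq_le_one (ν := ν) (hunit t) i
    have h2 := (key (t+1)).1
    nlinarith
  -- convergence of off coordinates (shifted)
  have hjshift : ∀ j, j ≠ i → Tendsto (fun t => c j (t+1)) atTop (nhds 0) := by
    intro j hj
    have hb : Tendsto (fun t : ℕ => (1/2 : ℝ) ^ (t+2) * lam i / lam j) atTop (nhds 0) := by
      have h1 : Tendsto (fun t : ℕ => (1/2 : ℝ) ^ t) atTop (nhds 0) :=
        tendsto_pow_atTop_nhds_zero_of_lt_one (by norm_num) (by norm_num)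
      have h2 : Tendsto (fun t : ℕ => (1/2 : ℝ) ^ (t+2)) atTop (nhds 0) :=
        h1.comp (tendsto_add_atTop_nat 2)
      have h3 := (h2.mul_const (lam i)).div_const (lam j)
      simpa using h3
    apply squeeze_zero_norm _ hb
    intro t
    have hb1 := (key (t+1)).2 j hj
    have h2 := hcile t
    have hcp := (key (t+1)).1
    rw [Real.norm_eq_abs, le_div_iff₀ (hlam j)]
    have e : |c j (t+1)| * lam j = |lam j * c j (t+1)| := by
      rw [abs_mul, abs_of_pos (hlam j)]; ring
    rw [e]
    calc |lam j * c j (t+1)| ≤ (1/2 : ℝ) ^ (t+1+1) * (lam i * c i (t+1)) := hb1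
      _ ≤ (1/2 : ℝ) ^ (t+2) * lam i := by
          have hp : (0:ℝ) < (1/2 : ℝ) ^ (t+2) := by positivity
          have h4 : lam i * c i (t+1) ≤ lam i := by nlinarith [hlam i]
          calc (1/2 : ℝ) ^ (t+1+1) * (lam i * c i (t+1))
              = (1/2 : ℝ) ^ (t+2) * (lam i * c i (t+1)) := by norm_num
            _ ≤ (1/2 : ℝ) ^ (t+2) * lam i := mul_le_mul_of_nonneg_left h4 hp.le
  have hjten : ∀ j, j ≠ i → Tendsto (fun t => c j t) atTop (nhds 0) := by
    intro j hj
    exact (Filter.tendsto_add_atTop_iff_nat 1).1 (hjshift j hj)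
  -- convergence of the i-th coordinate (shifted)
  have hsumz : Tendsto (fun t => ∑ j ∈ Finset.univ.erase i, (c j (t+1)) ^ 2) atTop (nhds 0) := by
    have h1 : Tendsto (fun t => ∑ j ∈ Finset.univ.erase i, (c j (t+1)) ^ 2) atTop
        (nhds (∑ j ∈ Finset.univ.erase i, (0:ℝ))) := by
      apply tendsto_finset_sum
      intro j hjmem
      have hj : j ≠ i := Finset.ne_of_mem_erase hjmem
      have h2 := (hjshift j hj).mul (hjshift j hj)
      have h3 : Tendsto (fun t => (c j (t+1)) ^ 2) atTop (nhds (0*0)) := by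
        apply h2.congr
        intro t; rw [sq]
      simpa using h3
    simpa using h1
  have hishift : Tendsto (fun t => c i (t+1)) atTop (nhds 1) := by
    have hlow : ∀ t, 1 - (∑ j ∈ Finset.univ.erase i, (c j (t+1)) ^ 2) ≤ c i (t+1) := by
      intro t
      have e : (c i (t+1)) ^ 2 + ∑ j ∈ Finset.univ.erase i, (c j (t+1)) ^ 2 = 1 := by
        rw [← hunit t]
        exact Finset.add_sum_erase _ (fun l => c l (t+1) ^ 2) (Finset.mem_univ i)
      nlinarith [(key (t+1)).1, hcile t]
    have hlowten : Tendsto (fun t => 1 - (∑ j ∈ Finset.univ.erase i, (c j (t+1)) ^ 2)) atTop (nhds 1) := by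
      have := (tendsto_const_nhds (x := (1:ℝ)) (f := atTop (α := ℕ))).sub hsumz
      simpa using this
    exact tendsto_of_tendsto_of_tendsto_of_le_of_le hlowten tendsto_const_nhds hlow hcile
  have hiten : Tendsto (fun t => c i t) atTop (nhds 1) :=
    (Filter.tendsto_add_atTop_iff_nat 1).1 hishift
  refine ⟨hne, ?_⟩
  rw [tendsto_pi_nhds]
  intro l
  have hcoord : ∀ m : Fin k, Tendsto (fun t => c m t) atTop (nhds (if m = i then (1:ℝ) else 0)) := by
    intro m
    by_cases hm : m = i
    · subst hm; simpa using hiten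
    · simpa [hm] using hjten m hm
  have h1 : Tendsto (fun t => ∑ m, c m t * ν m l) atTop
      (nhds (∑ m, (if m = i then (1:ℝ) else 0) * ν m l)) :=
    tendsto_finset_sum _ fun m _ => (hcoord m).mul_const (ν m l)
  have h2 : (∑ m, (if m = i then (1:ℝ) else 0) * ν m l) = ν i l := by
    simp [ite_mul, Finset.sum_ite_eq']
  rw [h2] at h1
  apply h1.congr
  intro t
  exact (hcomp (g t) l).symm
end abs1

section abs2
variable {k : ℕ} {ν : Fin k → Fin k → ℝ} {lam : Fin k → ℝ}
  {Tm : (Fin k → ℝ) → Fin k → ℝ}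
  (horth : ∀ i j, dotp (ν i) (ν j) = if i = j then 1 else 0)
  (hcomp : ∀ (x : Fin k → ℝ) l, x l = ∑ i, dotp (ν i) x * ν i l)
  (hlam : ∀ i, 0 < lam i)
  (hTm : ∀ (u : Fin k → ℝ) l, dotp (ν l) (Tm u) = lam l * (dotp (ν l) u) ^ 2)

include horth hcomp hlam hTm in
lemma robustB (u : Fin k → ℝ) (hu : RobustEigG Tm u) : ∃ i, u = ν i := by
  obtain ⟨hu1, ε, hε, hall⟩ := hu
  have husub : enorm' (u - u) ≤ ε := by
    rw [sub_self, (enorm'_eq_zero_iff (0 : Fin k → ℝ)).2 rfl]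
    exact hε.le
  obtain ⟨hne0, htend0⟩ := hall u husub
  set cu : Fin k → ℝ := fun l => dotp (ν l) u with hcu
  set g := powSeqG Tm u with hg
  have hcoordten : ∀ l, Tendsto (fun t => dotp (ν l) (g t)) atTop (nhds (cu l)) :=
    fun l => tendsto_dotp (ν l) htend0
  have hnform : ∀ (x : Fin k → ℝ),
      enorm' (Tm x) = Real.sqrt (∑ l, (lam l * (dotp (ν l) x) ^ 2) ^ 2) := by
    intro x
    rw [enorm'_eq_sqrt_dotp, parseval hcomp]
    congr 1
    exact Finset.sum_congr rfl fun l _ => by rw [hTm]; ring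
  set nu := enorm' (Tm u) with hnu
  have hTu_ne : Tm u ≠ 0 := hne0 0
  have hnupos : 0 < nu := enorm'_pos_of_ne _ hTu_ne
  have hnten : Tendsto (fun t => enorm' (Tm (g t))) atTop (nhds nu) := by
    have h1 : Tendsto (fun t => ∑ l, (lam l * (dotp (ν l) (g t)) ^ 2) ^ 2) atTop
        (nhds (∑ l, (lam l * (cu l) ^ 2) ^ 2)) :=
      tendsto_finset_sum _ fun l _ => (((hcoordten l).pow 2).const_mul (lam l)).pow 2
    have h3 := (Real.continuous_sqrt.tendsto _).comp h1
    rw [hnu, hnform u]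
    apply h3.congr
    intro t
    exact (hnform (g t)).symm
  have hfix : ∀ l, lam l * (cu l) ^ 2 = nu * cu l := by
    intro l
    have hshift : Tendsto (fun t => dotp (ν l) (g (t+1))) atTop (nhds (cu l)) :=
      (hcoordten l).comp (tendsto_add_atTop_nat 1)
    have hrhs : Tendsto (fun t => (enorm' (Tm (g t)))⁻¹ * (lam l * (dotp (ν l) (g t)) ^ 2)) atTop
        (nhds (nu⁻¹ * (lam l * (cu l) ^ 2))) :=
      (hnten.inv₀ hnupos.ne').mul (((hcoordten l).pow 2).const_mul (lam l))
    have heq : (fun t => dotp (ν l) (g (t+1)))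
        = fun t => (enorm' (Tm (g t)))⁻¹ * (lam l * (dotp (ν l) (g t)) ^ 2) :=
      funext fun t => coord_step hTm u t l
    rw [heq] at hshift
    have h5 : cu l = nu⁻¹ * (lam l * (cu l) ^ 2) := tendsto_nhds_unique hshift hrhs
    calc lam l * cu l ^ 2 = nu * (nu⁻¹ * (lam l * cu l ^ 2)) := by field_simp
      _ = nu * cu l := by rw [← h5]
  have hsum1 : ∑ l, (cu l) ^ 2 = 1 := by
    have h2 : dotp u u = 1 := by rw [← sq_enorm', hu1]; norm_num
    calc ∑ l, (cu l) ^ 2 = ∑ l, cu l * cu l := Finset.sum_congr rfl fun l _ => sq (cu l)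
      _ = dotp u u := (parseval hcomp u u).symm
      _ = 1 := h2
  have hsupp : ∀ l, cu l ≠ 0 → cu l = nu / lam l := by
    intro l h
    have h2 : cu l * (lam l * cu l - nu) = 0 := by linear_combination hfix l
    rcases mul_eq_zero.1 h2 with h3 | h3
    · exact absurd h3 h
    · have : lam l * cu l = nu := by linarith
      field_simp [(hlam l).ne']
      linarith [this]
  by_cases hpair : ∃ i j, i ≠ j ∧ cu i ≠ 0 ∧ cu j ≠ 0
  · obtain ⟨i, j, hij, hi, hj⟩ := hpair
    exfalso
    have hcui : cu i = nu / lam i := hsupp i hi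
    have hcuj : cu j = nu / lam j := hsupp j hj
    have hipos : 0 < cu i := by rw [hcui]; exact div_pos hnupos (hlam i)
    have hjpos : 0 < cu j := by rw [hcuj]; exact div_pos hnupos (hlam j)
    set θ := u + ε • ν i with hθdef
    have hν1 : enorm' (ν i) = 1 := by
      rw [enorm'_eq_sqrt_dotp]
      have := horth i i
      rw [if_pos rfl] at this
      rw [this, Real.sqrt_one]
    have hθnear : enorm' (θ - u) ≤ ε := by
      have e : θ - u = ε • ν i := by rw [hθdef]; abel
      rw [e, enorm'_smul, abs_of_pos hε, hν1, mul_one]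
    obtain ⟨hneθ, htendθ⟩ := hall θ hθnear
    set gp := powSeqG Tm θ with hgp
    set cp : Fin k → ℕ → ℝ := fun l t => dotp (ν l) (gp t) with hcp
    have hci0 : cp i 0 = cu i + ε := by
      show dotp (ν i) θ = _
      rw [hθdef, dotp_add_right, dotp_smul_right]
      have := horth i i
      rw [if_pos rfl] at this
      rw [this, mul_one]
    have hcj0 : cp j 0 = cu j := by
      show dotp (ν j) θ = _
      rw [hθdef, dotp_add_right, dotp_smul_right]
      have := horth j i
      rw [if_neg (fun e : j = i => hij e.symm)] at this
      rw [this, mul_zero, add_zero]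
    set q := nu / (nu + lam i * ε) with hq
    have hden : 0 < nu + lam i * ε := by nlinarith [mul_pos (hlam i) hε]
    have hq0 : 0 < q := div_pos hnupos hden
    have hq1 : q < 1 := by
      rw [hq, div_lt_one hden]
      nlinarith [hlam i, hε]
    have hbase : 0 < cp i 0 ∧ 0 < cp j 0 ∧ |lam j * cp j 0| ≤ q ^ (0+1) * (lam i * cp i 0) := by
      refine ⟨by rw [hci0]; linarith, by rw [hcj0]; exact hjpos, ?_⟩
      rw [hci0, hcj0, pow_one]
      have e1 : lam j * cu j = nu := by
        rw [hcuj, mul_comm, div_mul_cancel₀ nu (hlam j).ne']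
      have e2 : lam i * (cu i + ε) = nu + lam i * ε := by
        rw [hcui, mul_add, mul_comm (lam i) (nu / lam i), div_mul_cancel₀ nu (hlam i).ne']
      rw [e1, e2, abs_of_pos hnupos, hq]
      exact le_of_eq (div_mul_cancel₀ nu hden.ne').symm
    have keyp : ∀ t, 0 < cp i t ∧ 0 < cp j t ∧
        |lam j * cp j t| ≤ q ^ (t+1) * (lam i * cp i t) := by
      intro t
      induction t with
      | zero => exact hbase
      | succ t ih =>
        obtain ⟨h1, h2, h3⟩ := ih
        have hnp : 0 < enorm' (Tm (gp t)) := enorm'_pos_of_ne _ (hneθ t)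
        refine ⟨?_, ?_, ratio_step hTm θ t i j q hq0.le hq1.le (hneθ t) h3⟩
        · rw [show cp i (t+1) = _ from coord_step hTm θ t i]
          exact mul_pos (inv_pos.2 hnp) (mul_pos (hlam i) (pow_pos h1 2))
        · rw [show cp j (t+1) = _ from coord_step hTm θ t j]
          exact mul_pos (inv_pos.2 hnp) (mul_pos (hlam j) (pow_pos h2 2))
    have hunitp : ∀ t, ∑ l, (cp l (t+1)) ^ 2 = 1 := fun t => unit_next hcomp (gp t) (hneθ t)
    have hcile : ∀ t, cp i (t+1) ≤ 1 := by
      intro t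
      have h1 := coord_sq_le_one (ν := ν) (hunitp t) i
      nlinarith [(keyp (t+1)).1]
    have hjten : Tendsto (fun t => cp j (t+1)) atTop (nhds 0) := by
      have hb : Tendsto (fun t : ℕ => q ^ (t+2) * lam i / lam j) atTop (nhds 0) := by
        have h1 : Tendsto (fun t : ℕ => q ^ t) atTop (nhds 0) :=
          tendsto_pow_atTop_nhds_zero_of_lt_one hq0.le hq1
        have h2 : Tendsto (fun t : ℕ => q ^ (t+2)) atTop (nhds 0) :=
          h1.comp (tendsto_add_atTop_nat 2)
        have h3 := (h2.mul_const (lam i)).div_const (lam j)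
        simpa using h3
      apply squeeze_zero (fun t => (keyp (t+1)).2.1.le) _ hb
      intro t
      have hb1 := (keyp (t+1)).2.2
      have h2 := hcile t
      have hcp1 := (keyp (t+1)).1
      have hcpj := (keyp (t+1)).2.1
      rw [le_div_iff₀ (hlam j)]
      have e : cp j (t+1) * lam j = |lam j * cp j (t+1)| := by
        rw [abs_mul, abs_of_pos (hlam j), abs_of_pos hcpj]; ring
      rw [e]
      calc |lam j * cp j (t+1)| ≤ q ^ (t+1+1) * (lam i * cp i (t+1)) := hb1
        _ ≤ q ^ (t+2) * lam i := by
            have hp : (0:ℝ) < q ^ (t+2) := pow_pos hq0 _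
            have h4 : lam i * cp i (t+1) ≤ lam i := by nlinarith [hlam i]
            calc q ^ (t+1+1) * (lam i * cp i (t+1))
                = q ^ (t+2) * (lam i * cp i (t+1)) := by norm_num
              _ ≤ q ^ (t+2) * lam i := mul_le_mul_of_nonneg_left h4 hp.le
    have hjlim : Tendsto (fun t => cp j t) atTop (nhds (cu j)) :=
      tendsto_dotp (ν j) htendθ
    have hjlim1 : Tendsto (fun t => cp j (t+1)) atTop (nhds (cu j)) :=
      hjlim.comp (tendsto_add_atTop_nat 1)
    have := tendsto_nhds_unique hjlim1 hjten
    linarith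
  · push_neg at hpair
    have hex : ∃ i, cu i ≠ 0 := by
      by_contra hno
      push_neg at hno
      rw [Finset.sum_eq_zero (fun l _ => by rw [hno l]; ring)] at hsum1
      norm_num at hsum1
    obtain ⟨i, hi⟩ := hex
    have hzero : ∀ j, j ≠ i → cu j = 0 := fun j hj => hpair i j (Ne.symm hj) hi
    have hsq1 : (cu i) ^ 2 = 1 := by
      rw [← hsum1]
      exact (Finset.sum_eq_single_of_mem (f := fun l => cu l ^ 2) i (Finset.mem_univ i)
        (fun j _ hj => by show cu j ^ 2 = 0; rw [hzero j hj]; ring)).symm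
    have hipos : 0 < cu i := by
      rw [hsupp i hi]; exact div_pos hnupos (hlam i)
    have hone : cu i = 1 := by nlinarith
    refine ⟨i, funext fun l => ?_⟩
    rw [hcomp u l]
    rw [Finset.sum_eq_single_of_mem (f := fun m => dotp (ν m) u * ν m l) i (Finset.mem_univ i)
      (fun j _ hj => by show cu j * ν j l = 0; rw [hzero j hj, zero_mul])]
    show cu i * ν i l = ν i l
    rw [hone, one_mul]
end abs2

section conc
variable {d k : ℕ} (w : Fin k → ℝ) (hw : ∀ i, 0 < w i)
  (μ : Fin k → Fin d → ℝ) (W : Matrix (Fin d) (Fin k) ℝ)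
  (hW : Wᵀ * M2 w μ * W = 1)

lemma M2_entry (x y : Fin d) : M2 w μ x y = ∑ i, w i * (μ i x * μ i y) := by
  simp [M2, Matrix.sum_apply, Matrix.vecMulVec_apply, mul_assoc]

include hw hW in
lemma hsum_conc (a b : Fin k) :
    ∑ i, mutil w μ W i a * mutil w μ W i b = if a = b then (1:ℝ) else 0 := by
  classical
  have hentry : (Wᵀ * M2 w μ * W) a b
      = ∑ i, w i * (Wᵀ.mulVec (μ i) a * Wᵀ.mulVec (μ i) b) := by
    rw [Matrix.mul_apply]
    have h1 : ∀ y, (Wᵀ * M2 w μ) a y = ∑ i, w i * (Wᵀ.mulVec (μ i) a * μ i y) := by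
      intro y
      rw [Matrix.mul_apply]
      calc ∑ x, Wᵀ a x * M2 w μ x y
          = ∑ x, ∑ i, w i * (Wᵀ a x * μ i x) * μ i y := by
            refine Finset.sum_congr rfl fun x _ => ?_
            rw [M2_entry, Finset.mul_sum]
            exact Finset.sum_congr rfl fun i _ => by ring
        _ = ∑ i, ∑ x, w i * (Wᵀ a x * μ i x) * μ i y := Finset.sum_comm
        _ = ∑ i, w i * (Wᵀ.mulVec (μ i) a * μ i y) := by
            refine Finset.sum_congr rfl fun i _ => ?_
            rw [Matrix.mulVec, dotProduct, Finset.sum_mul, Finset.mul_sum]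
            exact Finset.sum_congr rfl fun x _ => by ring
    calc ∑ y, (Wᵀ * M2 w μ) a y * W y b
        = ∑ y, ∑ i, w i * (Wᵀ.mulVec (μ i) a * μ i y) * W y b := by
          refine Finset.sum_congr rfl fun y _ => ?_
          rw [h1 y, Finset.sum_mul]
      _ = ∑ i, ∑ y, w i * (Wᵀ.mulVec (μ i) a * μ i y) * W y b := Finset.sum_comm
      _ = ∑ i, w i * (Wᵀ.mulVec (μ i) a * Wᵀ.mulVec (μ i) b) := by
          refine Finset.sum_congr rfl fun i _ => ?_
          simp only [Matrix.mulVec, dotProduct, Matrix.transpose_apply]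
          rw [Finset.mul_sum, Finset.mul_sum]
          exact Finset.sum_congr rfl fun y _ => by ring
  have hl : ∑ i, mutil w μ W i a * mutil w μ W i b
      = ∑ i, w i * (Wᵀ.mulVec (μ i) a * Wᵀ.mulVec (μ i) b) := by
    refine Finset.sum_congr rfl fun i _ => ?_
    simp only [mutil, Pi.smul_apply, smul_eq_mul]
    linear_combination ((Wᵀ.mulVec (μ i)) a * (Wᵀ.mulVec (μ i)) b) * Real.mul_self_sqrt (hw i).le
  rw [hl, ← hentry, hW, Matrix.one_apply]

include hw hW in
lemma hcomp_conc (x : Fin k → ℝ) (l : Fin k) :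
    x l = ∑ i, dotp (mutil w μ W i) x * mutil w μ W i l := by
  classical
  calc x l = ∑ a, (if l = a then (1:ℝ) else 0) * x a := by
        simp [ite_mul]
    _ = ∑ a, (∑ i, mutil w μ W i l * mutil w μ W i a) * x a := by
        refine Finset.sum_congr rfl fun a _ => ?_
        rw [hsum_conc w hw μ W hW l a]
    _ = ∑ a, ∑ i, mutil w μ W i l * (mutil w μ W i a * x a) := by
        refine Finset.sum_congr rfl fun a _ => ?_
        rw [Finset.sum_mul]
        exact Finset.sum_congr rfl fun i _ => by ring
    _ = ∑ i, ∑ a, mutil w μ W i l * (mutil w μ W i a * x a) := Finset.sum_comm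
    _ = ∑ i, dotp (mutil w μ W i) x * mutil w μ W i l := by
        refine Finset.sum_congr rfl fun i _ => ?_
        rw [← Finset.mul_sum, dotp]
        ring

include hw hW in
lemma horth_conc (i j : Fin k) :
    dotp (mutil w μ W i) (mutil w μ W j) = if i = j then (1:ℝ) else 0 := by
  classical
  set U : Matrix (Fin k) (Fin k) ℝ := Matrix.of (fun a i => mutil w μ W i a) with hU
  have hUUT : U * Uᵀ = 1 := by
    ext a b
    rw [Matrix.mul_apply, Matrix.one_apply]
    calc ∑ i, U a i * Uᵀ i b = ∑ i, mutil w μ W i a * mutil w μ W i b := rfl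
      _ = if a = b then (1:ℝ) else 0 := hsum_conc w hw μ W hW a b
  have hUTU : Uᵀ * U = 1 := mul_eq_one_comm.mp hUUT
  have := congrFun (congrFun hUTU i) j
  rw [Matrix.mul_apply] at this
  rw [show (1 : Matrix (Fin k) (Fin k) ℝ) i j = if i = j then (1:ℝ) else 0 from Matrix.one_apply] at this
  rw [← this, dotp]
  rfl

lemma hswap_conc (v : Fin d → ℝ) (x : Fin k → ℝ) :
    dotp (Wᵀ.mulVec v) x = dotp v (W.mulVec x) := by
  calc dotp (Wᵀ.mulVec v) x = ∑ l, (∑ y, W y l * v y) * x l := by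
        refine Finset.sum_congr rfl fun l _ => ?_
        simp only [Matrix.mulVec, dotProduct, Matrix.transpose_apply]
    _ = ∑ l, ∑ y, v y * (W y l * x l) := by
        refine Finset.sum_congr rfl fun l _ => ?_
        rw [Finset.sum_mul]
        exact Finset.sum_congr rfl fun y _ => by ring
    _ = ∑ y, ∑ l, v y * (W y l * x l) := Finset.sum_comm
    _ = dotp v (W.mulVec x) := by
        refine Finset.sum_congr rfl fun y _ => ?_
        rw [← Finset.mul_sum, Matrix.mulVec, dotProduct]

include hw in
lemma hWmu_conc (i : Fin k) (x : Fin k → ℝ) :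
    dotp (μ i) (W.mulVec x) = (Real.sqrt (w i))⁻¹ * dotp (mutil w μ W i) x := by
  have hs : Real.sqrt (w i) ≠ 0 := (Real.sqrt_pos.2 (hw i)).ne'
  have h1 : dotp (mutil w μ W i) x = Real.sqrt (w i) * dotp (Wᵀ.mulVec (μ i)) x := by
    simp only [mutil, dotp, Pi.smul_apply, smul_eq_mul, Finset.mul_sum]
    exact Finset.sum_congr rfl fun l _ => by ring
  rw [h1, hswap_conc]
  field_simp

include hw in
lemma hM3_conc (x y z : Fin k → ℝ) :
    M3til w μ W x y z = ∑ i, (1 / Real.sqrt (w i)) * (dotp (mutil w μ W i) x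
      * (dotp (mutil w μ W i) y * dotp (mutil w μ W i) z)) := by
  refine Finset.sum_congr rfl fun i _ => ?_
  rw [hWmu_conc w hw μ W i x, hWmu_conc w hw μ W i y, hWmu_conc w hw μ W i z]
  have hs : Real.sqrt (w i) ≠ 0 := (Real.sqrt_pos.2 (hw i)).ne'
  have hinv : (Real.sqrt (w i))⁻¹ * (Real.sqrt (w i))⁻¹ = (w i)⁻¹ := by
    rw [← mul_inv, Real.mul_self_sqrt (hw i).le]
  have key : w i * (Real.sqrt (w i))⁻¹ * (Real.sqrt (w i))⁻¹ * (Real.sqrt (w i))⁻¹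
      = 1 / Real.sqrt (w i) := by
    calc w i * (Real.sqrt (w i))⁻¹ * (Real.sqrt (w i))⁻¹ * (Real.sqrt (w i))⁻¹
        = w i * ((Real.sqrt (w i))⁻¹ * (Real.sqrt (w i))⁻¹) * (Real.sqrt (w i))⁻¹ := by ring
      _ = w i * (w i)⁻¹ * (Real.sqrt (w i))⁻¹ := by rw [hinv]
      _ = (Real.sqrt (w i))⁻¹ := by rw [mul_inv_cancel₀ (hw i).ne', one_mul]
      _ = 1 / Real.sqrt (w i) := (one_div _).symm
  rw [← key]
  ring
end conc

section conc2
variable {d k : ℕ} (w : Fin k → ℝ) (hw : ∀ i, 0 < w i)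
  (μ : Fin k → Fin d → ℝ) (W : Matrix (Fin d) (Fin k) ℝ)
  (hW : Wᵀ * M2 w μ * W = 1)

include hw in
lemma tmap3_eq (u : Fin k → ℝ) (j : Fin k) :
    tmap3 w μ W u j = ∑ i, (1 / Real.sqrt (w i))
      * ((dotp (mutil w μ W i) u) ^ 2 * mutil w μ W i j) := by
  rw [show tmap3 w μ W u j = M3til w μ W (Pi.single j 1) u u from rfl,
    hM3_conc w hw μ W (Pi.single j 1) u u]
  refine Finset.sum_congr rfl fun i _ => ?_
  rw [dotp_single_right]
  ring

include hw hW in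
lemma hTm_conc (u : Fin k → ℝ) (l : Fin k) :
    dotp (mutil w μ W l) (tmap3 w μ W u) = (1 / Real.sqrt (w l)) * (dotp (mutil w μ W l) u) ^ 2 := by
  classical
  calc dotp (mutil w μ W l) (tmap3 w μ W u)
      = ∑ j, mutil w μ W l j * ∑ i, (1 / Real.sqrt (w i))
          * ((dotp (mutil w μ W i) u) ^ 2 * mutil w μ W i j) := by
        refine Finset.sum_congr rfl fun j _ => ?_
        rw [tmap3_eq w hw μ W u j]
    _ = ∑ j, ∑ i, (1 / Real.sqrt (w i)) * (dotp (mutil w μ W i) u) ^ 2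
          * (mutil w μ W l j * mutil w μ W i j) := by
        refine Finset.sum_congr rfl fun j _ => ?_
        rw [Finset.mul_sum]
        exact Finset.sum_congr rfl fun i _ => by ring
    _ = ∑ i, ∑ j, (1 / Real.sqrt (w i)) * (dotp (mutil w μ W i) u) ^ 2
          * (mutil w μ W l j * mutil w μ W i j) := Finset.sum_comm
    _ = ∑ i, (1 / Real.sqrt (w i)) * (dotp (mutil w μ W i) u) ^ 2
          * (if l = i then (1:ℝ) else 0) := by
        refine Finset.sum_congr rfl fun i _ => ?_
        rw [← Finset.mul_sum, show (∑ j, mutil w μ W l j * mutil w μ W i j)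
          = dotp (mutil w μ W l) (mutil w μ W i) from rfl, horth_conc w hw μ W hW l i]
    _ = (1 / Real.sqrt (w l)) * (dotp (mutil w μ W l) u) ^ 2 := by
        simp [mul_ite]
end conc2

section conc3
variable {d k : ℕ} (w : Fin k → ℝ) (hw : ∀ i, 0 < w i)
  (μ : Fin k → Fin d → ℝ) (W : Matrix (Fin d) (Fin k) ℝ)
  (hW : Wᵀ * M2 w μ * W = 1)

include hw hW in
lemma heig_conc (i : Fin k) :
    tmap3 w μ W (mutil w μ W i) = (1 / Real.sqrt (w i)) • mutil w μ W i := by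
  classical
  funext j
  rw [tmap3_eq w hw μ W (mutil w μ W i) j]
  rw [Finset.sum_eq_single_of_mem
    (f := fun m => (1 / Real.sqrt (w m)) * ((dotp (mutil w μ W m) (mutil w μ W i)) ^ 2 * mutil w μ W m j))
    i (Finset.mem_univ i) ?side]
  · rw [horth_conc w hw μ W hW i i, if_pos rfl]
    simp
  case side =>
    intro m _ hm
    show (1 / Real.sqrt (w m)) * ((dotp (mutil w μ W m) (mutil w μ W i)) ^ 2 * mutil w μ W m j) = 0
    rw [horth_conc w hw μ W hW m i, if_neg hm]
    ring

include hw hW in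
lemma hB_conc (i : Fin k) :
    (1 / Real.sqrt (w i)) • (M2 w μ * W).mulVec (mutil w μ W i) = μ i := by
  classical
  have hs : Real.sqrt (w i) ≠ 0 := (Real.sqrt_pos.2 (hw i)).ne'
  have hBx : ∀ x, ((M2 w μ * W).mulVec (mutil w μ W i)) x
      = w i * ((Real.sqrt (w i))⁻¹ * μ i x) := by
    intro x
    rw [← Matrix.mulVec_mulVec]
    set y := W.mulVec (mutil w μ W i) with hy
    calc (M2 w μ).mulVec y x = ∑ z, M2 w μ x z * y z := rfl
      _ = ∑ z, ∑ j, w j * μ j x * (μ j z * y z) := by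
          refine Finset.sum_congr rfl fun z _ => ?_
          rw [M2_entry, Finset.sum_mul]
          exact Finset.sum_congr rfl fun j _ => by ring
      _ = ∑ j, ∑ z, w j * μ j x * (μ j z * y z) := Finset.sum_comm
      _ = ∑ j, w j * μ j x * dotp (μ j) y := by
          refine Finset.sum_congr rfl fun j _ => ?_
          rw [← Finset.mul_sum, dotp]
      _ = ∑ j, w j * μ j x * ((Real.sqrt (w j))⁻¹ * (if j = i then (1:ℝ) else 0)) := by
          refine Finset.sum_congr rfl fun j _ => ?_
          rw [hy, hWmu_conc w hw μ W j (mutil w μ W i), horth_conc w hw μ W hW j i]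
      _ = w i * ((Real.sqrt (w i))⁻¹ * μ i x) := by
          rw [Finset.sum_eq_single_of_mem i (Finset.mem_univ i)
            (fun j _ hj => by rw [if_neg hj]; ring)]
          rw [if_pos rfl]; ring
  funext x
  show (1 / Real.sqrt (w i)) * ((M2 w μ * W).mulVec (mutil w μ W i)) x = μ i x
  rw [hBx x]
  have hinv : (Real.sqrt (w i))⁻¹ * (Real.sqrt (w i))⁻¹ = (w i)⁻¹ := by
    rw [← mul_inv, Real.mul_self_sqrt (hw i).le]
  calc (1 / Real.sqrt (w i)) * (w i * ((Real.sqrt (w i))⁻¹ * μ i x))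
      = w i * ((Real.sqrt (w i))⁻¹ * (Real.sqrt (w i))⁻¹) * μ i x := by
        rw [one_div]; ring
    _ = μ i x := by rw [hinv, mul_inv_cancel₀ (hw i).ne', one_mul]

include hw hW in
lemma span_conc : Submodule.span ℝ (Set.range (mutil w μ W)) = ⊤ := by
  rw [Submodule.eq_top_iff']
  intro x
  have hx : x = ∑ i, dotp (mutil w μ W i) x • mutil w μ W i := by
    funext l
    rw [Finset.sum_apply]
    simpa using hcomp_conc w hw μ W hW x l
  rw [hx]
  exact Submodule.sum_mem _ fun i _ =>
    Submodule.smul_mem _ _ (Submodule.subset_span (Set.mem_range_self i))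
end conc3



/-- **Reduction of moment tensors to an orthogonally decomposable tensor.**
With `M₂ = ∑ w_i μ_i μ_iᵀ`, whitening matrix `W` (`Wᵀ M₂ W = I`), `μ̃_i := √w_i Wᵀμ_i` and
`M̃₃(x,y,z) := M₃(Wx, Wy, Wz)`: (1) the `μ̃_i` form an orthonormal basis of `ℝ^k` and
`M̃₃ = ∑ (1/√w_i) μ̃_i^⊗3`; (2) the robust eigenvectors of `M̃₃` are exactly the `μ̃_i`,
with eigenvalues `1/√w_i`; (3) `(1/√w_i) • M₂ W μ̃_i = μ_i`, so every robust
eigenvector/eigenvalue pair `(v, λ)` of `M̃₃` satisfies `λ • M₂ W v = μ_i` for some `i`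
(here `B = M₂ W` is the Moore–Penrose pseudoinverse of `Wᵀ`). -/
theorem stmt9 {d k : ℕ} (w : Fin k → ℝ) (hw : ∀ i, 0 < w i)
    (μ : Fin k → Fin d → ℝ) (hli : LinearIndependent ℝ μ)
    (W : Matrix (Fin d) (Fin k) ℝ)
    (hW : Wᵀ * M2 w μ * W = 1) :
    ((∀ i j, dotp (mutil w μ W i) (mutil w μ W j) = if i = j then 1 else 0) ∧
      Submodule.span ℝ (Set.range (mutil w μ W)) = ⊤ ∧
      (∀ x y z : Fin k → ℝ,
        M3til w μ W x y z
          = ∑ i, (1 / Real.sqrt (w i)) * (dotp (mutil w μ W i) x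
              * (dotp (mutil w μ W i) y * dotp (mutil w μ W i) z)))) ∧
    ({u : Fin k → ℝ | RobustEigG (tmap3 w μ W) u} = Set.range (mutil w μ W) ∧
      ∀ i, tmap3 w μ W (mutil w μ W i) = (1 / Real.sqrt (w i)) • mutil w μ W i) ∧
    ((∀ i, (1 / Real.sqrt (w i)) • (M2 w μ * W).mulVec (mutil w μ W i) = μ i) ∧
      ∀ (u : Fin k → ℝ) (lam0 : ℝ),
        RobustEigG (tmap3 w μ W) u → tmap3 w μ W u = lam0 • u →
        ∃ i, lam0 • (M2 w μ * W).mulVec u = μ i)  := by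
  have horth := horth_conc w hw μ W hW
  have hcomp := hcomp_conc w hw μ W hW
  have hlam : ∀ i, (0:ℝ) < 1 / Real.sqrt (w i) :=
    fun i => div_pos one_pos (Real.sqrt_pos.2 (hw i))
  have hTm := hTm_conc w hw μ W hW
  have hset : {u : Fin k → ℝ | RobustEigG (tmap3 w μ W) u} = Set.range (mutil w μ W) := by
    ext u
    simp only [Set.mem_setOf_eq, Set.mem_range]
    constructor
    · intro h
      obtain ⟨i, hi⟩ := robustB horth hcomp hlam hTm u h
      exact ⟨i, hi.symm⟩
    · rintro ⟨i, rfl⟩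
      exact robustA horth hcomp hlam hTm i
  refine ⟨⟨horth, span_conc w hw μ W hW, hM3_conc w hw μ W⟩,
    ⟨hset, heig_conc w hw μ W hW⟩, ⟨hB_conc w hw μ W hW, ?_⟩⟩
  intro u lam0 hrob heqv
  obtain ⟨i, rfl⟩ := robustB horth hcomp hlam hTm u hrob
  have heig := heig_conc w hw μ W hW i
  have hsm : lam0 • mutil w μ W i = (1 / Real.sqrt (w i)) • mutil w μ W i := by
    rw [← heqv, heig]
  have hx : ∃ a, mutil w μ W i a ≠ 0 := by
    by_contra hno
    push_neg at hno
    have h1 := horth i i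
    rw [if_pos rfl] at h1
    have h2 : dotp (mutil w μ W i) (mutil w μ W i) = 0 :=
      Finset.sum_eq_zero fun a _ => by rw [hno a, zero_mul]
    rw [h1] at h2
    norm_num at h2
  obtain ⟨a, ha⟩ := hx
  have h2 := congrFun hsm a
  simp only [Pi.smul_apply, smul_eq_mul] at h2
  have hlam0 : lam0 = 1 / Real.sqrt (w i) := mul_right_cancel₀ ha h2
  exact ⟨i, by rw [hlam0]; exact hB_conc w hw μ W hW i⟩

end
end
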